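/- arXiv:1209.6589 — 2 statements merged into one kernel-verified Lean document; each statement's English description precedes it below -/
import Mathlib

section
/- Suppose x_{m+1} = A_m x_m admits a general dichotomy with bounds (a_{m,n}) and (b_{m,n}), the f_m are Lipschitz with f_m(0)=0, lim_{m→∞} a_{m,n} b_{m,n} = 0 for every n, α < +∞, β < +∞, and 2α + max{2β, √β} < 1. Then for φ ∈ 𝒳 the following are equivalent: (a) for every n ∈ ℕ, every m ≥ n and every ξ ∈ E_n, φ_m(x^φ_{n,m}(ξ)) = 𝒜_{m,n} φ_n(ξ) + Σ_{k=n}^{m−1} 𝒜_{m,k+1} Q_{k+1} f_k(x^φ_{n,k}(ξ) + φ_k(x^φ_{n,k}(ξ))); (b) for every n ∈ ℕ and every ξ ∈ E_n, φ_n(ξ) = − Σ_{k=n}^{∞} (𝒜_{k+1,n}|_{F_n})^{−1} Q_{k+1} f_k(x^φ_{n,k}(ξ) + φ_k(x^φ_{n,k}(ξ))). -/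
/-- `calA A m n` is the linear evolution operator
`𝒜_{m,n} = A_{m-1} ∘ ⋯ ∘ A_n` (and the identity if `m ≤ n`). -/
def calA {X : Type*} [NormedAddCommGroup X] [NormedSpace ℝ X]
    (A : ℕ → X →L[ℝ] X) : ℕ → ℕ → X →L[ℝ] X
  | 0, _ => ContinuousLinearMap.id ℝ X
  | m + 1, n => if m + 1 ≤ n then ContinuousLinearMap.id ℝ X else (A m).comp (calA A m n)

section calAAux

variable {X : Type*} [NormedAddCommGroup X] [NormedSpace ℝ X] (A : ℕ → X →L[ℝ] X)

lemma calA_self (n : ℕ) : calA A n n = ContinuousLinearMap.id ℝ X := by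
  cases n with
  | zero => rfl
  | succ m => rw [calA, if_pos le_rfl]

lemma calA_succ (k n : ℕ) (h : n ≤ k) : calA A (k + 1) n = (A k).comp (calA A k n) := by
  rw [calA, if_neg (by omega)]

lemma calA_comp {j m k : ℕ} (hjm : j ≤ m) (hmk : m ≤ k) (v : X) :
    calA A k m (calA A m j v) = calA A k j v := by
  induction k, hmk using Nat.le_induction with
  | base => rw [calA_self]; rfl
  | succ k hk ih =>
      rw [calA_succ A k m hk, calA_succ A k j (hjm.trans hk)]
      simp only [ContinuousLinearMap.comp_apply, ih]

end calAAux

set_option maxHeartbeats 2000000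

/-- Lemma 3.2 : equivalence between the graph-invariance identity and the
fixed-point identity for `φ`. -/
theorem graph_identity_iff_series_identity
    {X : Type*} [NormedAddCommGroup X] [NormedSpace ℝ X] [CompleteSpace X]
    (A P : ℕ → X →L[ℝ] X) (B : ℕ → ℕ → X →L[ℝ] X) (a b : ℕ → ℕ → ℝ)
    -- the bounds are positive
    (ha : ∀ m n : ℕ, n ≤ m → 0 < a m n) (hb : ∀ m n : ℕ, n ≤ m → 0 < b m n)
    -- the `P n` are bounded projections
    (hproj : ∀ n, (P n).comp (P n) = P n)
    -- (S1) : `P m ∘ 𝒜_{m,n} = 𝒜_{m,n} ∘ P n`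
    (hS1 : ∀ m n : ℕ, n ≤ m → (P m).comp (calA A m n) = (calA A m n).comp (P n))
    -- (S2)/(S3) : `B m n` is the operator `(𝒜_{m,n}|_{F n})⁻¹ ∘ Q m`, where `Q m = Id - P m`;
    -- its existence encodes that `𝒜_{m,n}` maps `F n = ker (P n)` bijectively onto `F m`
    (hB1 : ∀ m n : ℕ, n ≤ m → ∀ x : X, calA A m n (B m n x) = x - P m x)
    (hB2 : ∀ m n : ℕ, n ≤ m → ∀ x : X, B m n (calA A m n x) = x - P n x)
    (hBF : ∀ m n : ℕ, n ≤ m → ∀ x : X, P n (B m n x) = 0)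
    -- (D1) : `‖𝒜_{m,n} P n‖ ≤ a m n`
    (hD1 : ∀ m n : ℕ, n ≤ m → ‖(calA A m n).comp (P n)‖ ≤ a m n)
    -- (D2) : `‖(𝒜_{m,n}|_{F n})⁻¹ Q m‖ ≤ b m n`
    (hD2 : ∀ m n : ℕ, n ≤ m → ‖B m n‖ ≤ b m n)
    -- the perturbations `f k` vanish at `0` and are Lipschitz with constant `L k`
    (f : ℕ → X → X) (L : ℕ → ℝ) (hL0 : ∀ k, 0 ≤ L k) (hf0 : ∀ k, f k 0 = 0)
    (hLip : ∀ (k : ℕ) (u v : X), ‖f k u - f k v‖ ≤ L k * ‖u - v‖)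
    -- `α = sup_{m>n} (1/a_{m,n}) ∑_{k=n}^{m-1} a_{m,k+1} a_{k,n} Lip(f k) < ∞`
    (α : ℝ)
    (hα : IsLUB {r : ℝ | ∃ m n : ℕ, n < m ∧
      r = (∑ k ∈ Finset.Ico n m, a m (k + 1) * (a k n * L k)) / a m n} α)
    -- `β = sup_n ∑_{k=n}^{∞} b_{k+1,n} a_{k,n} Lip(f k) < ∞`
    (β : ℝ)
    (hsum : ∀ n : ℕ, Summable fun j : ℕ => b (n + j + 1) n * (a (n + j) n * L (n + j)))
    (hβ : IsLUB {r : ℝ | ∃ n : ℕ,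
      r = ∑' j : ℕ, b (n + j + 1) n * (a (n + j) n * L (n + j))} β)
    -- `2α + max {2β, √β} < 1`
    (hcond : 2 * α + max (2 * β) (Real.sqrt β) < 1)
    -- `lim_{m→∞} a_{m,n} b_{m,n} = 0` for every `n`
    (hlim : ∀ n : ℕ, Filter.Tendsto (fun m : ℕ => a m n * b m n) Filter.atTop (nhds 0))
    (φ : ∀ n : ℕ, LinearMap.range (P n : X →ₗ[ℝ] X) → LinearMap.ker (P n : X →ₗ[ℝ] X))
    (hφ : ((∀ n, φ n 0 = 0) ∧
      ∀ (n : ℕ) (ξ ξ' : LinearMap.range (P n : X →ₗ[ℝ] X)),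
        ‖(φ n ξ : X) - (φ n ξ' : X)‖ ≤ ‖(ξ : X) - (ξ' : X)‖))
    (x : ∀ n m : ℕ, LinearMap.range (P n : X →ₗ[ℝ] X) → LinearMap.range (P m : X →ₗ[ℝ] X))
    (hx : ∀ n : ℕ, ((∀ m : ℕ, n ≤ m → x n m 0 = 0) ∧
      (∃ C : ℝ, ∀ m : ℕ, n ≤ m → ∀ ξ : LinearMap.range (P n : X →ₗ[ℝ] X),
        ‖(x n m ξ : X)‖ ≤ C * (a m n * ‖(ξ : X)‖)) ∧
      (∀ m : ℕ, n ≤ m → ∀ ξ : LinearMap.range (P n : X →ₗ[ℝ] X),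
        (x n m ξ : X) = calA A m n (ξ : X) +
          ∑ k ∈ Finset.Ico n m,
            calA A m (k + 1) (P (k + 1) (f k ((x n k ξ : X) + (φ k (x n k ξ) : X)))))))
    :
    -- (a) the identity (15) holds
    (∀ n m : ℕ, n ≤ m → ∀ ξ : LinearMap.range (P n : X →ₗ[ℝ] X),
        (φ m (x n m ξ) : X) = calA A m n ((φ n ξ : X)) +
          ∑ k ∈ Finset.Ico n m,
            calA A m (k + 1)
              (f k ((x n k ξ : X) + (φ k (x n k ξ) : X)) -
                P (k + 1) (f k ((x n k ξ : X) + (φ k (x n k ξ) : X))))) ↔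
    -- (b) `φ n ξ = - ∑_{k=n}^{∞} (𝒜_{k+1,n}|_{F n})⁻¹ Q_{k+1} f k (x_k ξ + φ_k(x_k ξ))`
    (∀ n : ℕ, ∀ ξ : LinearMap.range (P n : X →ₗ[ℝ] X),
        HasSum
          (fun j : ℕ => B (n + j + 1) n (f (n + j)
          ((x n (n + j) ξ : X) + (φ (n + j) (x n (n + j) ξ) : X))))
          (-(φ n ξ : X))) := by
  obtain ⟨hφ0, hφLip⟩ := hφ
  have hφ0' : ∀ k : ℕ, ((φ k 0 : X)) = (0 : X) := by
    intro k; rw [hφ0 k]; rfl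
  have hφn : ∀ (k : ℕ) (u : LinearMap.range (P k : X →ₗ[ℝ] X)), ‖(φ k u : X)‖ ≤ ‖(u : X)‖ := by
    intro k u
    have h := hφLip k u 0
    simpa [hφ0'] using h
  have hker : ∀ (k : ℕ) (u : LinearMap.range (P k : X →ₗ[ℝ] X)), P k ((φ k u : X)) = 0 := by
    intro k u
    have h := (φ k u).2
    rwa [LinearMap.mem_ker] at h
  have hAP : ∀ p q : ℕ, q ≤ p → ∀ v : X, ‖calA A p q (P q v)‖ ≤ a p q * ‖v‖ := by
    intro p q h v
    calc ‖calA A p q (P q v)‖ = ‖((calA A p q).comp (P q)) v‖ := rfl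
      _ ≤ ‖(calA A p q).comp (P q)‖ * ‖v‖ := ContinuousLinearMap.le_opNorm _ v
      _ ≤ a p q * ‖v‖ := mul_le_mul_of_nonneg_right (hD1 p q h) (norm_nonneg v)
  have hBop : ∀ p q : ℕ, q ≤ p → ∀ v : X, ‖B p q v‖ ≤ b p q * ‖v‖ := by
    intro p q h v
    exact le_trans (ContinuousLinearMap.le_opNorm _ v)
      (mul_le_mul_of_nonneg_right (hD2 p q h) (norm_nonneg v))
  have hαbd : ∀ p q : ℕ, q < p →
      ∑ k ∈ Finset.Ico q p, a p (k + 1) * (a k q * L k) ≤ α * a p q := by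
    intro p q hqp
    have hmem := hα.1 ⟨p, q, hqp, rfl⟩
    rwa [div_le_iff₀ (ha p q hqp.le)] at hmem
  have hα0 : 0 ≤ α := by
    have h1 := hαbd 1 0 one_pos
    have h2 : (0:ℝ) ≤ ∑ k ∈ Finset.Ico 0 1, a 1 (k + 1) * (a k 0 * L k) := by
      apply Finset.sum_nonneg
      intro k hk
      obtain ⟨hk1, hk2⟩ := Finset.mem_Ico.mp hk
      have := ha 1 (k+1) (by omega)
      have := ha k 0 (by omega)
      have := hL0 k
      positivity
    nlinarith [ha 1 0 one_pos.le]
  have h2α : 2 * α < 1 := by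
    have h1 := Real.sqrt_nonneg β
    have h2 := le_max_right (2 * β) (Real.sqrt β)
    linarith
  -- B kills the range of P
  have keyBP : ∀ p q : ℕ, q ≤ p → ∀ v : X, B p q (P p v) = 0 := by
    intro p q hqp v
    have hPP : P p (P p v) = P p v := by
      have := ContinuousLinearMap.ext_iff.mp (hproj p) v
      simpa using this
    have h0 : calA A p q (B p q (P p v)) = 0 := by
      rw [hB1 p q hqp, hPP, sub_self]
    have h2 := hB2 p q hqp (B p q (P p v))
    rw [h0, map_zero, hBF p q hqp, sub_zero] at h2
    exact h2.symm
  have key1 : ∀ p q r : ℕ, q ≤ p → p ≤ r → ∀ v : X,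
      B r q (calA A r p (v - P p v)) = B p q v := by
    intro p q r hqp hpr v
    have h1 : calA A r p (v - P p v) = calA A r q (B p q v) := by
      rw [← hB1 p q hqp v, calA_comp A hqp hpr]
    rw [h1, hB2 r q (hqp.trans hpr), hBF p q hqp v, sub_zero]
  have key2 : ∀ q m p : ℕ, q ≤ m → m ≤ p → ∀ v : X,
      calA A m q (B p q v) = B p m v := by
    intro q m p hqm hmp v
    have hPz : P m (calA A m q (B p q v)) = 0 := by
      have h := ContinuousLinearMap.ext_iff.mp (hS1 m q hqm) (B p q v)
      simp only [ContinuousLinearMap.comp_apply] at h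
      rw [h, hBF p q (hqm.trans hmp), map_zero]
    have hAz : calA A p m (calA A m q (B p q v)) = v - P p v := by
      rw [calA_comp A hqm hmp, hB1 p q (hqm.trans hmp)]
    have h2 := hB2 p m hmp (calA A m q (B p q v))
    rw [hAz, hPz, sub_zero, map_sub, keyBP p m hmp v, sub_zero] at h2
    exact h2.symm
  have key3 : ∀ q p m : ℕ, q ≤ p → p ≤ m → ∀ v : X,
      calA A m q (B p q v) = calA A m p (v - P p v) := by
    intro q p m hqp hpm v
    rw [← hB1 p q hqp v]
    exact (calA_comp A hqp hpm _).symm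
  -- splitting of the fixed-point equation at an intermediate time
  have xsplit : ∀ n m k : ℕ, n ≤ m → m ≤ k → ∀ ξ : LinearMap.range (P n : X →ₗ[ℝ] X),
      (x n k ξ : X) = calA A k m ((x n m ξ : X)) +
        ∑ j ∈ Finset.Ico m k,
          calA A k (j + 1) (P (j + 1) (f j ((x n j ξ : X) + (φ j (x n j ξ) : X)))) := by
    intro n m k hnm hmk ξ
    have hxe := (hx n).2.2
    rw [hxe m hnm ξ, map_add, map_sum, calA_comp A hnm hmk]
    have hterm : ∀ j ∈ Finset.Ico n m,
        calA A k m (calA A m (j + 1) (P (j + 1) (f j ((x n j ξ : X) + (φ j (x n j ξ) : X)))))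
          = calA A k (j + 1) (P (j + 1) (f j ((x n j ξ : X) + (φ j (x n j ξ) : X)))) := by
      intro j hj
      obtain ⟨hj1, hj2⟩ := Finset.mem_Ico.mp hj
      exact calA_comp A (by omega) hmk _
    rw [Finset.sum_congr rfl hterm, add_assoc,
      Finset.sum_Ico_consecutive _ hnm hmk, ← hxe k (hnm.trans hmk) ξ]
  -- the cocycle property via uniqueness (contraction)
  have cocycle : ∀ n m : ℕ, n ≤ m → ∀ ξ : LinearMap.range (P n : X →ₗ[ℝ] X), ∀ k : ℕ, m ≤ k →
      (x m k (x n m ξ) : X) = (x n k ξ : X) := by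
    intro n m hnm ξ
    obtain ⟨Cn, hCn⟩ := (hx n).2.1
    obtain ⟨Cm, hCm⟩ := (hx m).2.1
    set η : LinearMap.range (P m : X →ₗ[ℝ] X) := x n m ξ with hη
    set d : ℕ → ℝ := fun k => ‖(x n k ξ : X) - (x m k η : X)‖ with hd
    set w : ℕ → ℝ := fun k => a k n + a k m with hw
    have hd0 : ∀ k, 0 ≤ d k := fun k => norm_nonneg _
    have hwpos : ∀ k, m ≤ k → 0 < w k := fun k hk =>
      add_pos (ha k n (hnm.trans hk)) (ha k m hk)
    set S : Set ℝ := {r | ∃ k, m ≤ k ∧ r = d k / w k} with hS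
    have hSne : S.Nonempty := ⟨d m / w m, m, le_rfl, rfl⟩
    have hSbdd : BddAbove S := by
      refine ⟨|Cn| * ‖(ξ : X)‖ + |Cm| * ‖(η : X)‖, ?_⟩
      rintro r ⟨k, hk, rfl⟩
      rw [div_le_iff₀ (hwpos k hk)]
      have han := ha k n (hnm.trans hk)
      have ham := ha k m hk
      have h1 : ‖(x n k ξ : X)‖ ≤ |Cn| * ‖(ξ : X)‖ * a k n := by
        have h := hCn k (hnm.trans hk) ξ
        have h' := mul_le_mul_of_nonneg_right (le_abs_self Cn)
          (mul_nonneg han.le (norm_nonneg (ξ : X)))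
        nlinarith
      have h2 : ‖(x m k η : X)‖ ≤ |Cm| * ‖(η : X)‖ * a k m := by
        have h := hCm k hk η
        have h' := mul_le_mul_of_nonneg_right (le_abs_self Cm)
          (mul_nonneg ham.le (norm_nonneg (η : X)))
        nlinarith
      have h3 := norm_sub_le (x n k ξ : X) (x m k η : X)
      have h4 : (0:ℝ) ≤ |Cn| * ‖(ξ : X)‖ := mul_nonneg (abs_nonneg _) (norm_nonneg _)
      have h5 : (0:ℝ) ≤ |Cm| * ‖(η : X)‖ := mul_nonneg (abs_nonneg _) (norm_nonneg _)
      show d k ≤ (|Cn| * ‖(ξ : X)‖ + |Cm| * ‖(η : X)‖) * w k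
      have hwk : w k = a k n + a k m := rfl
      rw [hwk]
      nlinarith [mul_nonneg h4 ham.le, mul_nonneg h5 han.le]
    set M : ℝ := sSup S with hM
    have hMub : ∀ k, m ≤ k → d k ≤ M * w k := by
      intro k hk
      have h : d k / w k ≤ M := le_csSup hSbdd ⟨k, hk, rfl⟩
      rw [div_le_iff₀ (hwpos k hk)] at h
      linarith
    have hM0 : 0 ≤ M := by
      have h1 : (0:ℝ) ≤ d m / w m := div_nonneg (hd0 m) (hwpos m le_rfl).le
      exact h1.trans (le_csSup hSbdd ⟨m, le_rfl, rfl⟩)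
    have hrec : ∀ k, m ≤ k → d k ≤ 2 * α * M * w k := by
      intro k hk
      rcases eq_or_lt_of_le hk with heq | hlt
      · have hxm : (x m k η : X) = (η : X) := by
          rw [(hx m).2.2 k hk η, ← heq, calA_self, Finset.Ico_self, Finset.sum_empty, add_zero]
          rfl
        have hdm : d k = 0 := by
          show ‖(x n k ξ : X) - (x m k η : X)‖ = 0
          rw [hxm, hη, ← heq, sub_self, norm_zero]
        rw [hdm]
        have hwp := hwpos k hk
        exact mul_nonneg (mul_nonneg (mul_nonneg (by norm_num) hα0) hM0) hwp.le
      · -- the difference satisfies the recurrence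
        have hdiff : (x n k ξ : X) - (x m k η : X) =
            ∑ j ∈ Finset.Ico m k, calA A k (j + 1) (P (j + 1)
              (f j ((x n j ξ : X) + (φ j (x n j ξ) : X)) -
               f j ((x m j η : X) + (φ j (x m j η) : X)))) := by
          rw [xsplit n m k hnm hk ξ, (hx m).2.2 k hk η, ← hη]
          rw [add_sub_add_comm, sub_self, zero_add, ← Finset.sum_sub_distrib]
          apply Finset.sum_congr rfl
          intro j hj
          rw [← map_sub, ← map_sub]
        have hterm : ∀ j ∈ Finset.Ico m k,
            ‖calA A k (j + 1) (P (j + 1)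
              (f j ((x n j ξ : X) + (φ j (x n j ξ) : X)) -
               f j ((x m j η : X) + (φ j (x m j η) : X))))‖
              ≤ 2 * M * (a k (j + 1) * (a j n * L j)) + 2 * M * (a k (j + 1) * (a j m * L j)) := by
          intro j hj
          obtain ⟨hj1, hj2⟩ := Finset.mem_Ico.mp hj
          have hfd : ‖f j ((x n j ξ : X) + (φ j (x n j ξ) : X)) -
               f j ((x m j η : X) + (φ j (x m j η) : X))‖ ≤ L j * (2 * d j) := by
            have h1 := hLip j ((x n j ξ : X) + (φ j (x n j ξ) : X))
              ((x m j η : X) + (φ j (x m j η) : X))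
            have h2 : ‖((x n j ξ : X) + (φ j (x n j ξ) : X)) -
                ((x m j η : X) + (φ j (x m j η) : X))‖ ≤ 2 * d j := by
              have h3 := norm_add_le ((x n j ξ : X) - (x m j η : X))
                ((φ j (x n j ξ) : X) - (φ j (x m j η) : X))
              have h4 := hφLip j (x n j ξ) (x m j η)
              have h5 : ((x n j ξ : X) + (φ j (x n j ξ) : X)) -
                ((x m j η : X) + (φ j (x m j η) : X)) =
                ((x n j ξ : X) - (x m j η : X)) + ((φ j (x n j ξ) : X) - (φ j (x m j η) : X)) := by
                abel
              rw [h5]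
              have hdj : d j = ‖(x n j ξ : X) - (x m j η : X)‖ := rfl
              rw [hdj]
              linarith
            exact h1.trans (mul_le_mul_of_nonneg_left h2 (hL0 j))
          have hAPj := hAP k (j + 1) (by omega)
            (f j ((x n j ξ : X) + (φ j (x n j ξ) : X)) -
             f j ((x m j η : X) + (φ j (x m j η) : X)))
          have hak := ha k (j + 1) (by omega)
          have hdjM : d j ≤ M * (a j n + a j m) := hMub j hj1
          have hLj := hL0 j
          have hajn := ha j n (hnm.trans hj1)
          have hajm := ha j m hj1
          have hchain : ‖calA A k (j + 1) (P (j + 1)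
              (f j ((x n j ξ : X) + (φ j (x n j ξ) : X)) -
               f j ((x m j η : X) + (φ j (x m j η) : X))))‖ ≤ a k (j + 1) * (L j * (2 * d j)) :=
            hAPj.trans (mul_le_mul_of_nonneg_left hfd hak.le)
          have hfin : a k (j + 1) * (L j * (2 * d j)) ≤
              2 * M * (a k (j + 1) * (a j n * L j)) + 2 * M * (a k (j + 1) * (a j m * L j)) := by
            nlinarith [mul_le_mul_of_nonneg_left hdjM
              (mul_nonneg (mul_nonneg (by norm_num : (0:ℝ) ≤ 2) hak.le) hLj)]
          exact hchain.trans hfin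
        have hdk : d k ≤ ∑ j ∈ Finset.Ico m k,
            (2 * M * (a k (j + 1) * (a j n * L j)) + 2 * M * (a k (j + 1) * (a j m * L j))) := by
          have h := norm_sum_le (Finset.Ico m k) (fun j => calA A k (j + 1) (P (j + 1)
              (f j ((x n j ξ : X) + (φ j (x n j ξ) : X)) -
               f j ((x m j η : X) + (φ j (x m j η) : X)))))
          have hdkeq : d k = ‖(x n k ξ : X) - (x m k η : X)‖ := rfl
          rw [hdkeq, hdiff]
          exact h.trans (Finset.sum_le_sum hterm)
        rw [Finset.sum_add_distrib, ← Finset.mul_sum, ← Finset.mul_sum] at hdk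
        have hs1 : ∑ j ∈ Finset.Ico m k, a k (j + 1) * (a j n * L j) ≤ α * a k n := by
          refine le_trans (Finset.sum_le_sum_of_subset_of_nonneg
            (Finset.Ico_subset_Ico hnm le_rfl) ?_) (hαbd k n (lt_of_le_of_lt hnm hlt))
          intro j hj _
          obtain ⟨hj1, hj2⟩ := Finset.mem_Ico.mp hj
          have := ha k (j + 1) (by omega)
          have := ha j n hj1
          have := hL0 j
          positivity
        have hs2 : ∑ j ∈ Finset.Ico m k, a k (j + 1) * (a j m * L j) ≤ α * a k m :=
          hαbd k m hlt
        have h2M : (0:ℝ) ≤ 2 * M := by linarith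
        have hwk : w k = a k n + a k m := rfl
        rw [hwk]
        nlinarith [mul_le_mul_of_nonneg_left hs1 h2M, mul_le_mul_of_nonneg_left hs2 h2M]
    have hMle : M ≤ 2 * α * M := by
      apply csSup_le hSne
      rintro r ⟨k, hk, rfl⟩
      rw [div_le_iff₀ (hwpos k hk)]
      exact hrec k hk
    have hMz : M = 0 := by nlinarith
    intro k hk
    have h := hrec k hk
    rw [hMz] at h
    have hz : d k = 0 := le_antisymm (by linarith) (hd0 k)
    have h2 : ‖(x n k ξ : X) - (x m k η : X)‖ = 0 := hz
    exact (sub_eq_zero.mp (norm_eq_zero.mp h2)).symm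
  constructor
  · -- (a) ⇒ (b)
    intro hA n ξ
    obtain ⟨Cn, hCn⟩ := (hx n).2.1
    set g : ℕ → X := fun k => f k ((x n k ξ : X) + (φ k (x n k ξ) : X)) with hg
    have hxb : ∀ k, n ≤ k → ‖(x n k ξ : X)‖ ≤ |Cn| * (a k n * ‖(ξ : X)‖) := by
      intro k hk
      have h := hCn k hk ξ
      have h' := mul_le_mul_of_nonneg_right (le_abs_self Cn)
        (mul_nonneg (ha k n hk).le (norm_nonneg (ξ : X)))
      linarith
    have hgb : ∀ k, n ≤ k → ‖g k‖ ≤ L k * (2 * (|Cn| * (a k n * ‖(ξ : X)‖))) := by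
      intro k hk
      have h1 : ‖g k‖ ≤ L k * ‖(x n k ξ : X) + (φ k (x n k ξ) : X)‖ := by
        have h := hLip k ((x n k ξ : X) + (φ k (x n k ξ) : X)) 0
        rw [hf0 k, sub_zero, sub_zero] at h
        simpa only [hg] using h
      have h2 : ‖(x n k ξ : X) + (φ k (x n k ξ) : X)‖ ≤ 2 * (|Cn| * (a k n * ‖(ξ : X)‖)) := by
        have h3 := norm_add_le (x n k ξ : X) (φ k (x n k ξ) : X)
        have h4 := hφn k (x n k ξ)
        have h5 := hxb k hk
        linarith
      exact h1.trans (mul_le_mul_of_nonneg_left h2 (hL0 k))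
    have hsummable : Summable (fun j : ℕ => B (n + j + 1) n (g (n + j))) := by
      apply Summable.of_norm_bounded
        (g := fun j => (2 * |Cn| * ‖(ξ : X)‖) * (b (n + j + 1) n * (a (n + j) n * L (n + j))))
        ((hsum n).mul_left _)
      intro j
      have h1 := hBop (n + j + 1) n (by omega) (g (n + j))
      have h2 := hgb (n + j) (by omega)
      have h3 : b (n + j + 1) n * ‖g (n + j)‖ ≤
          b (n + j + 1) n * (L (n + j) * (2 * (|Cn| * (a (n + j) n * ‖(ξ : X)‖)))) :=
        mul_le_mul_of_nonneg_left h2 (hb (n + j + 1) n (by omega)).le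
      calc ‖B (n + j + 1) n (g (n + j))‖ ≤ b (n + j + 1) n * ‖g (n + j)‖ := h1
        _ ≤ b (n + j + 1) n * (L (n + j) * (2 * (|Cn| * (a (n + j) n * ‖(ξ : X)‖)))) := h3
        _ = (2 * |Cn| * ‖(ξ : X)‖) * (b (n + j + 1) n * (a (n + j) n * L (n + j))) := by ring
    have hpart : ∀ m : ℕ, n ≤ m → ∑ k ∈ Finset.Ico n m, B (k + 1) n (g k)
        = B m n ((φ m (x n m ξ) : X)) - (φ n ξ : X) := by
      intro m hm
      have h := congrArg (fun v => B m n v) (hA n m hm ξ)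
      simp only [map_add, map_sum] at h
      have h0 : B m n (calA A m n ((φ n ξ : X))) = (φ n ξ : X) := by
        rw [hB2 m n hm, hker n ξ, sub_zero]
      rw [h0] at h
      have hterm : ∀ k ∈ Finset.Ico n m,
          B m n (calA A m (k + 1)
            (f k ((x n k ξ : X) + (φ k (x n k ξ) : X)) -
             P (k + 1) (f k ((x n k ξ : X) + (φ k (x n k ξ) : X)))))
          = B (k + 1) n (f k ((x n k ξ : X) + (φ k (x n k ξ) : X))) := by
        intro k hk
        obtain ⟨hk1, hk2⟩ := Finset.mem_Ico.mp hk
        exact key1 (k + 1) n m (by omega) (by omega) _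
      rw [Finset.sum_congr rfl hterm] at h
      have hbridge : ∑ k ∈ Finset.Ico n m, B (k + 1) n (g k)
          = ∑ k ∈ Finset.Ico n m, B (k + 1) n (f k ((x n k ξ : X) + (φ k (x n k ξ) : X))) := by
        simp only [hg]
      rw [hbridge, h]
      abel
    have hmono : Filter.Tendsto (fun N : ℕ => n + N) Filter.atTop Filter.atTop :=
      Filter.tendsto_atTop_mono (fun N => Nat.le_add_left N n) Filter.tendsto_id
    have hlim2 : Filter.Tendsto
        (fun N : ℕ => (|Cn| * ‖(ξ : X)‖) * (a (n + N) n * b (n + N) n))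
        Filter.atTop (nhds 0) := by
      have h := ((hlim n).comp hmono).const_mul (|Cn| * ‖(ξ : X)‖)
      simpa using h
    have hTend : Filter.Tendsto
        (fun N : ℕ => ∑ j ∈ Finset.range N, B (n + j + 1) n (g (n + j)))
        Filter.atTop (nhds (-(φ n ξ : X))) := by
      rw [tendsto_iff_norm_sub_tendsto_zero]
      refine squeeze_zero (fun N => norm_nonneg _) (fun N => ?_) hlim2
      have hrange : ∑ j ∈ Finset.range N, B (n + j + 1) n (g (n + j))
          = ∑ k ∈ Finset.Ico n (n + N), B (k + 1) n (g k) := by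
        rw [Finset.sum_Ico_eq_sum_range]
        simp
      have hsimp : (∑ j ∈ Finset.range N, B (n + j + 1) n (g (n + j))) - (-(φ n ξ : X))
          = B (n + N) n ((φ (n + N) (x n (n + N) ξ) : X)) := by
        rw [hrange, hpart (n + N) (by omega)]
        abel
      rw [hsimp]
      have h1 := hBop (n + N) n (by omega) ((φ (n + N) (x n (n + N) ξ) : X))
      have h2 := (hφn (n + N) (x n (n + N) ξ)).trans (hxb (n + N) (by omega))
      have h3 : b (n + N) n * ‖(φ (n + N) (x n (n + N) ξ) : X)‖
          ≤ b (n + N) n * (|Cn| * (a (n + N) n * ‖(ξ : X)‖)) :=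
        mul_le_mul_of_nonneg_left h2 (hb (n + N) n (by omega)).le
      calc ‖B (n + N) n ((φ (n + N) (x n (n + N) ξ) : X))‖
          ≤ b (n + N) n * ‖(φ (n + N) (x n (n + N) ξ) : X)‖ := h1
        _ ≤ b (n + N) n * (|Cn| * (a (n + N) n * ‖(ξ : X)‖)) := h3
        _ = (|Cn| * ‖(ξ : X)‖) * (a (n + N) n * b (n + N) n) := by ring
    have hhs := hsummable.hasSum
    have huniq : ∑' j : ℕ, B (n + j + 1) n (g (n + j)) = -(φ n ξ : X) :=
      tendsto_nhds_unique hhs.tendsto_sum_nat hTend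
    rw [huniq] at hhs
    simpa only [hg] using hhs
  · -- (b) ⇒ (a)
    intro hBs n m hnm ξ
    set g : ℕ → X := fun k => f k ((x n k ξ : X) + (φ k (x n k ξ) : X)) with hg
    have hcocS : ∀ k, m ≤ k → x m k (x n m ξ) = x n k ξ :=
      fun k hk => Subtype.ext (cocycle n m hnm ξ k hk)
    have h1 : HasSum (fun j : ℕ => B (n + j + 1) n (g (n + j))) (-(φ n ξ : X)) := by
      have h := hBs n ξ
      simpa only [hg] using h
    have h2 := (calA A m n).hasSum h1
    have h3 : HasSum (fun j : ℕ =>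
        (fun i : ℕ => calA A m n (B (n + i + 1) n (g (n + i)))) (j + (m - n)))
        (calA A m n (-(φ n ξ : X)) -
          ∑ i ∈ Finset.range (m - n), calA A m n (B (n + i + 1) n (g (n + i)))) := by
      refine (hasSum_nat_add_iff
        (f := fun i : ℕ => calA A m n (B (n + i + 1) n (g (n + i)))) (m - n)).2 ?_
      simpa using h2
    have hfun : (fun j : ℕ =>
        (fun i : ℕ => calA A m n (B (n + i + 1) n (g (n + i)))) (j + (m - n)))
        = fun j : ℕ => B (m + j + 1) m (g (m + j)) := by
      funext j
      show calA A m n (B (n + (j + (m - n)) + 1) n (g (n + (j + (m - n))))) = _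
      have e : n + (j + (m - n)) = m + j := by omega
      rw [e]
      exact key2 n m (m + j + 1) hnm (by omega) (g (m + j))
    rw [hfun] at h3
    have h5 : HasSum (fun j : ℕ => B (m + j + 1) m (g (m + j))) (-(φ m (x n m ξ) : X)) := by
      have h := hBs m (x n m ξ)
      have hre : (fun j : ℕ => B (m + j + 1) m (f (m + j)
          ((x m (m + j) (x n m ξ) : X) + (φ (m + j) (x m (m + j) (x n m ξ)) : X))))
          = fun j : ℕ => B (m + j + 1) m (g (m + j)) := by
        funext j
        rw [hcocS (m + j) (by omega)]
      rwa [hre] at h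
    have hTeq := h3.unique h5
    rw [map_neg] at hTeq
    have hterm : ∀ i ∈ Finset.range (m - n),
        calA A m n (B (n + i + 1) n (g (n + i)))
          = calA A m (n + i + 1) (g (n + i) - P (n + i + 1) (g (n + i))) := by
      intro i hi
      have := Finset.mem_range.mp hi
      exact key3 n (n + i + 1) m (by omega) (by omega) (g (n + i))
    rw [Finset.sum_congr rfl hterm] at hTeq
    have hIco : ∑ k ∈ Finset.Ico n m,
        calA A m (k + 1)
          (f k ((x n k ξ : X) + (φ k (x n k ξ) : X)) -
           P (k + 1) (f k ((x n k ξ : X) + (φ k (x n k ξ) : X))))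
        = ∑ i ∈ Finset.range (m - n),
            calA A m (n + i + 1) (g (n + i) - P (n + i + 1) (g (n + i))) := by
      rw [Finset.sum_Ico_eq_sum_range]
    rw [hIco]
    have h8 : -(φ m (x n m ξ) : X) = -(calA A m n ((φ n ξ : X)) +
        ∑ i ∈ Finset.range (m - n),
          calA A m (n + i + 1) (g (n + i) - P (n + i + 1) (g (n + i)))) := by
      rw [← hTeq]
      abel
    exact neg_inj.mp h8
end

section
/- Suppose x_{m+1} = A_m x_m admits a general dichotomy with bounds (a_{m,n}) and (b_{m,n}), the f_m are Lipschitz with f_m(0)=0, α < +∞, β < +∞, and 2α + max{2β, √β} < 1. Then there exists a unique φ ∈ 𝒳 such that φ_n(ξ) = − Σ_{k=n}^{∞} (𝒜_{k+1,n}|_{F_n})^{−1} Q_{k+1} f_k(x^φ_{n,k}(ξ) + φ_k(x^φ_{n,k}(ξ))) for every n ∈ ℕ and every ξ ∈ E_n. -/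
noncomputable def xs {X : Type*} [NormedAddCommGroup X] [NormedSpace ℝ X]
    (A P : ℕ → X →L[ℝ] X) (f : ℕ → X → X) (φ' : ℕ → X → X) (n : ℕ) (ξ : X) : ℕ → X
  | m => calA A m n ξ + ∑ k ∈ (Finset.Ico n m).attach,
      calA A m (k.1 + 1) (P (k.1 + 1) (f k.1
        (xs A P f φ' n ξ k.1 + φ' k.1 (xs A P f φ' n ξ k.1))))
  termination_by m => m
  decreasing_by exact (Finset.mem_Ico.mp k.2).2

theorem xs_eq {X : Type*} [NormedAddCommGroup X] [NormedSpace ℝ X]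
    (A P : ℕ → X →L[ℝ] X) (f : ℕ → X → X) (φ' : ℕ → X → X) (n : ℕ) (ξ : X) (m : ℕ) :
    xs A P f φ' n ξ m = calA A m n ξ + ∑ k ∈ Finset.Ico n m,
      calA A m (k + 1) (P (k + 1) (f k
        (xs A P f φ' n ξ k + φ' k (xs A P f φ' n ξ k)))) := by
  rw [xs]
  congr 1
  exact Finset.sum_attach (Finset.Ico n m) fun k =>
    calA A m (k + 1) (P (k + 1) (f k (xs A P f φ' n ξ k + φ' k (xs A P f φ' n ξ k))))

noncomputable def Tmap {X : Type*} [NormedAddCommGroup X] [NormedSpace ℝ X]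
    (A P : ℕ → X →L[ℝ] X) (B : ℕ → ℕ → X →L[ℝ] X) (f : ℕ → X → X)
    (φ' : ℕ → X → X) (n : ℕ) (x : X) : X :=
  -∑' j : ℕ, B (n + j + 1) n (f (n + j)
      (xs A P f φ' n (P n x) (n + j) + φ' (n + j) (xs A P f φ' n (P n x) (n + j))))

def iter {X : Type*} [Zero X] (T : (ℕ → X → X) → ℕ → X → X) : ℕ → ℕ → X → X
  | 0 => fun _ _ => 0
  | j + 1 => T (iter T j)

theorem calA_self_s8 {X : Type*} [NormedAddCommGroup X] [NormedSpace ℝ X]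
    (A : ℕ → X →L[ℝ] X) (n : ℕ) (x : X) : calA A n n x = x := by
  cases n <;> simp [calA]

set_option maxHeartbeats 1000000 in
/-- Lemma 3.3 : existence and uniqueness of `φ ∈ 𝒳` satisfying
`φ n ξ = - ∑_{k=n}^{∞} (𝒜_{k+1,n}|_{F n})⁻¹ Q_{k+1} f k (x^φ_{n,k} ξ + φ_k(x^φ_{n,k} ξ))`. -/
theorem exists_unique_phi
    {X : Type*} [NormedAddCommGroup X] [NormedSpace ℝ X] [CompleteSpace X]
    (A P : ℕ → X →L[ℝ] X) (B : ℕ → ℕ → X →L[ℝ] X) (a b : ℕ → ℕ → ℝ)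
    -- the bounds are positive
    (ha : ∀ m n : ℕ, n ≤ m → 0 < a m n) (hb : ∀ m n : ℕ, n ≤ m → 0 < b m n)
    -- the `P n` are bounded projections
    (hproj : ∀ n, (P n).comp (P n) = P n)
    -- (S1) : `P m ∘ 𝒜_{m,n} = 𝒜_{m,n} ∘ P n`
    (hS1 : ∀ m n : ℕ, n ≤ m → (P m).comp (calA A m n) = (calA A m n).comp (P n))
    -- (S2)/(S3) : `B m n` is the operator `(𝒜_{m,n}|_{F n})⁻¹ ∘ Q m`, where `Q m = Id - P m`;
    -- its existence encodes that `𝒜_{m,n}` maps `F n = ker (P n)` bijectively onto `F m`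
    (hB1 : ∀ m n : ℕ, n ≤ m → ∀ x : X, calA A m n (B m n x) = x - P m x)
    (hB2 : ∀ m n : ℕ, n ≤ m → ∀ x : X, B m n (calA A m n x) = x - P n x)
    (hBF : ∀ m n : ℕ, n ≤ m → ∀ x : X, P n (B m n x) = 0)
    -- (D1) : `‖𝒜_{m,n} P n‖ ≤ a m n`
    (hD1 : ∀ m n : ℕ, n ≤ m → ‖(calA A m n).comp (P n)‖ ≤ a m n)
    -- (D2) : `‖(𝒜_{m,n}|_{F n})⁻¹ Q m‖ ≤ b m n`
    (hD2 : ∀ m n : ℕ, n ≤ m → ‖B m n‖ ≤ b m n)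
    -- the perturbations `f k` vanish at `0` and are Lipschitz with constant `L k`
    (f : ℕ → X → X) (L : ℕ → ℝ) (hL0 : ∀ k, 0 ≤ L k) (hf0 : ∀ k, f k 0 = 0)
    (hLip : ∀ (k : ℕ) (u v : X), ‖f k u - f k v‖ ≤ L k * ‖u - v‖)
    -- `α = sup_{m>n} (1/a_{m,n}) ∑_{k=n}^{m-1} a_{m,k+1} a_{k,n} Lip(f k) < ∞`
    (α : ℝ)
    (hα : IsLUB {r : ℝ | ∃ m n : ℕ, n < m ∧
      r = (∑ k ∈ Finset.Ico n m, a m (k + 1) * (a k n * L k)) / a m n} α)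
    -- `β = sup_n ∑_{k=n}^{∞} b_{k+1,n} a_{k,n} Lip(f k) < ∞`
    (β : ℝ)
    (hsum : ∀ n : ℕ, Summable fun j : ℕ => b (n + j + 1) n * (a (n + j) n * L (n + j)))
    (hβ : IsLUB {r : ℝ | ∃ n : ℕ,
      r = ∑' j : ℕ, b (n + j + 1) n * (a (n + j) n * L (n + j))} β)
    -- `2α + max {2β, √β} < 1`
    (hcond : 2 * α + max (2 * β) (Real.sqrt β) < 1)
    :
    ∃ φ : ∀ n : ℕ, LinearMap.range (P n : X →ₗ[ℝ] X) → LinearMap.ker (P n : X →ₗ[ℝ] X),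
      (((∀ n, φ n 0 = 0) ∧
      ∀ (n : ℕ) (ξ ξ' : LinearMap.range (P n : X →ₗ[ℝ] X)),
        ‖(φ n ξ : X) - (φ n ξ' : X)‖ ≤ ‖(ξ : X) - (ξ' : X)‖) ∧
      (∀ (n : ℕ) (x : ∀ m : ℕ, LinearMap.range (P n : X →ₗ[ℝ] X) → LinearMap.range (P m : X →ₗ[ℝ] X)),
        ((∀ m : ℕ, n ≤ m → x m 0 = 0) ∧
          (∃ C : ℝ, ∀ m : ℕ, n ≤ m → ∀ ξ : LinearMap.range (P n : X →ₗ[ℝ] X),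
            ‖(x m ξ : X)‖ ≤ C * (a m n * ‖(ξ : X)‖)) ∧
          (∀ m : ℕ, n ≤ m → ∀ ξ : LinearMap.range (P n : X →ₗ[ℝ] X),
            (x m ξ : X) = calA A m n (ξ : X) +
              ∑ k ∈ Finset.Ico n m,
                calA A m (k + 1) (P (k + 1) (f k ((x k ξ : X) + (φ k (x k ξ) : X)))))) →
        ∀ ξ : LinearMap.range (P n : X →ₗ[ℝ] X),
          HasSum
            (fun j : ℕ => B (n + j + 1) n (f (n + j)
          ((x (n + j) ξ : X) + (φ (n + j) (x (n + j) ξ) : X))))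
            (-(φ n ξ : X)))) ∧
      (∀ ψ : ∀ n : ℕ, LinearMap.range (P n : X →ₗ[ℝ] X) → LinearMap.ker (P n : X →ₗ[ℝ] X),
        (((∀ n, ψ n 0 = 0) ∧
      ∀ (n : ℕ) (ξ ξ' : LinearMap.range (P n : X →ₗ[ℝ] X)),
        ‖(ψ n ξ : X) - (ψ n ξ' : X)‖ ≤ ‖(ξ : X) - (ξ' : X)‖) ∧
        (∀ (n : ℕ) (x : ∀ m : ℕ, LinearMap.range (P n : X →ₗ[ℝ] X) → LinearMap.range (P m : X →ₗ[ℝ] X)),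
        ((∀ m : ℕ, n ≤ m → x m 0 = 0) ∧
          (∃ C : ℝ, ∀ m : ℕ, n ≤ m → ∀ ξ : LinearMap.range (P n : X →ₗ[ℝ] X),
            ‖(x m ξ : X)‖ ≤ C * (a m n * ‖(ξ : X)‖)) ∧
          (∀ m : ℕ, n ≤ m → ∀ ξ : LinearMap.range (P n : X →ₗ[ℝ] X),
            (x m ξ : X) = calA A m n (ξ : X) +
              ∑ k ∈ Finset.Ico n m,
                calA A m (k + 1) (P (k + 1) (f k ((x k ξ : X) + (ψ k (x k ξ) : X)))))) →
        ∀ ξ : LinearMap.range (P n : X →ₗ[ℝ] X),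
          HasSum
            (fun j : ℕ => B (n + j + 1) n (f (n + j)
          ((x (n + j) ξ : X) + (ψ (n + j) (x (n + j) ξ) : X))))
            (-(ψ n ξ : X)))) → ψ = φ) := by
  classical
  -- pointwise versions of the operator hypotheses
  have hP : ∀ (n : ℕ) (x : X), P n (P n x) = P n x := by
    intro n x
    have h := congrArg (fun T : X →L[ℝ] X => T x) (hproj n)
    simpa using h
  have hrange : ∀ (n : ℕ) (ξ : LinearMap.range (P n : X →ₗ[ℝ] X)), P n (ξ : X) = (ξ : X) := by
    rintro n ⟨x, hx⟩
    obtain ⟨y, rfl⟩ := hx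
    exact hP n y
  have hS1' : ∀ m n : ℕ, n ≤ m → ∀ x : X, P m (calA A m n x) = calA A m n (P n x) := by
    intro m n h x
    have h2 := congrArg (fun T : X →L[ℝ] X => T x) (hS1 m n h)
    simpa using h2
  have hD1' : ∀ m n : ℕ, n ≤ m → ∀ x : X, ‖calA A m n (P n x)‖ ≤ a m n * ‖x‖ := by
    intro m n h x
    exact le_trans (((calA A m n).comp (P n)).le_opNorm x)
      (mul_le_mul_of_nonneg_right (hD1 m n h) (norm_nonneg x))
  have hD2' : ∀ m n : ℕ, n ≤ m → ∀ x : X, ‖B m n x‖ ≤ b m n * ‖x‖ := by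
    intro m n h x
    exact le_trans ((B m n).le_opNorm x)
      (mul_le_mul_of_nonneg_right (hD2 m n h) (norm_nonneg x))
  have hf1 : ∀ (k : ℕ) (u : X), ‖f k u‖ ≤ L k * ‖u‖ := by
    intro k u
    have h := hLip k u 0
    simpa [hf0 k] using h
  -- the basic constants
  have hβ0 : 0 ≤ β := by
    refine le_trans ?_ (hβ.1 ⟨0, rfl⟩)
    exact tsum_nonneg fun j => mul_nonneg (hb _ _ (by omega)).le
      (mul_nonneg (ha _ _ (by omega)).le (hL0 _))
  have hα0 : 0 ≤ α := by
    refine le_trans ?_ (hα.1 ⟨1, 0, by omega, rfl⟩)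
    apply div_nonneg _ (ha 1 0 (by omega)).le
    apply Finset.sum_nonneg
    intro k hk
    have hk' := Finset.mem_Ico.mp hk
    exact mul_nonneg (ha _ _ (by omega)).le (mul_nonneg (ha _ _ (by omega)).le (hL0 _))
  have h2α : 2 * α < 1 := by
    have h := le_max_right (2 * β) (Real.sqrt β)
    have h2 := Real.sqrt_nonneg β
    linarith
  have h1pos : (0:ℝ) < 1 - 2 * α := by linarith
  obtain ⟨C, hCdef⟩ : ∃ C : ℝ, C = (1 - 2 * α)⁻¹ := ⟨_, rfl⟩
  have hC0 : 0 < C := hCdef ▸ inv_pos.mpr h1pos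
  have hCid : C * (1 - 2 * α) = 1 := by rw [hCdef]; exact inv_mul_cancel₀ h1pos.ne'
  have hC2 : 2 * C * α + 1 = C := by linear_combination (-1 : ℝ) * hCid
  have h2β : 2 * β ≤ 1 - 2 * α := by
    have h := le_max_left (2 * β) (Real.sqrt β)
    linarith
  have h2Cβ : 2 * C * β ≤ 1 := by
    have h3 := mul_le_mul_of_nonneg_left h2β hC0.le
    calc 2 * C * β = C * (2 * β) := by ring
    _ ≤ C * (1 - 2 * α) := h3
    _ = 1 := hCid
  have hsqβ : Real.sqrt β < 1 - 2 * α := by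
    have h := le_max_right (2 * β) (Real.sqrt β); linarith
  have hβlt : β < (1 - 2 * α) ^ 2 := (Real.sqrt_lt' h1pos).mp hsqβ
  obtain ⟨θ, hθdef⟩ : ∃ θ : ℝ, θ = β * (C * C) := ⟨_, rfl⟩
  have hθ0 : 0 ≤ θ := hθdef ▸ mul_nonneg hβ0 (mul_nonneg hC0.le hC0.le)
  have hθ1 : θ < 1 := by
    have h3 : β * (C * C) < (1 - 2*α)^2 * (C * C) :=
      mul_lt_mul_of_pos_right hβlt (mul_pos hC0 hC0)
    have h4 : (1 - 2*α)^2 * (C * C) = (C * (1 - 2*α))^2 := by ring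
    rw [h4, hCid] at h3
    rw [hθdef]
    simpa using h3
  have hαle : ∀ m n : ℕ, n ≤ m →
      (∑ k ∈ Finset.Ico n m, a m (k+1) * (a k n * L k)) ≤ α * a m n := by
    intro m n h
    rcases eq_or_lt_of_le h with rfl | hlt
    · simp only [Finset.Ico_self, Finset.sum_empty]
      exact mul_nonneg hα0 (ha _ _ le_rfl).le
    · have hmem := hα.1 ⟨m, n, hlt, rfl⟩
      exact (div_le_iff₀ (ha m n h)).mp hmem
  have hβle : ∀ n : ℕ, (∑' j : ℕ, b (n+j+1) n * (a (n+j) n * L (n+j))) ≤ β :=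
    fun n => hβ.1 ⟨n, rfl⟩
  -- xs stays in the ranges
  have hxs_mem : ∀ (φ' : ℕ → X → X) (n : ℕ) (ξ : X), P n ξ = ξ →
      ∀ m, n ≤ m → P m (xs A P f φ' n ξ m) = xs A P f φ' n ξ m := by
    intro φ' n ξ hξ m hm
    rw [xs_eq, map_add, map_sum]
    congr 1
    · rw [hS1' m n hm, hξ]
    · refine Finset.sum_congr rfl fun k hk => ?_
      have hk' := Finset.mem_Ico.mp hk
      rw [hS1' m (k+1) (by omega), hP]
  -- xs vanishes at 0
  have hxs_zero : ∀ (φ' : ℕ → X → X), (∀ k, φ' k 0 = 0) → ∀ (n m : ℕ),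
      xs A P f φ' n 0 m = 0 := by
    intro φ' hz n m
    induction m using Nat.strong_induction_on with
    | _ m IH =>
      rw [xs_eq, map_zero, zero_add]
      apply Finset.sum_eq_zero
      intro k hk
      have hk' := Finset.mem_Ico.mp hk
      rw [IH k hk'.2, hz k, add_zero, hf0, map_zero, map_zero]
  -- growth estimate for xs
  have hxs_growth : ∀ (φ' : ℕ → X → X),
      (∀ k, φ' k 0 = 0) → (∀ k (x y : X), ‖φ' k x - φ' k y‖ ≤ ‖P k x - P k y‖) →
      ∀ (n : ℕ) (ξ : X), P n ξ = ξ → ∀ m, n ≤ m →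
      ‖xs A P f φ' n ξ m‖ ≤ C * (a m n * ‖ξ‖) := by
    intro φ' hz hlip n ξ hξ m
    induction m using Nat.strong_induction_on with
    | _ m IH =>
      intro hm
      rw [xs_eq]
      have hbound : ∀ k ∈ Finset.Ico n m,
          ‖calA A m (k+1) (P (k+1) (f k (xs A P f φ' n ξ k + φ' k (xs A P f φ' n ξ k))))‖
            ≤ (2 * C * ‖ξ‖) * (a m (k+1) * (a k n * L k)) := by
        intro k hk
        have hk' := Finset.mem_Ico.mp hk
        have h1 : ‖φ' k (xs A P f φ' n ξ k)‖ ≤ ‖xs A P f φ' n ξ k‖ := by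
          have h2 := hlip k (xs A P f φ' n ξ k) 0
          rw [hz k, sub_zero, map_zero, sub_zero, hxs_mem φ' n ξ hξ k hk'.1] at h2
          exact h2
        have h3 := IH k hk'.2 hk'.1
        have h2 : ‖xs A P f φ' n ξ k + φ' k (xs A P f φ' n ξ k)‖
            ≤ 2 * (C * (a k n * ‖ξ‖)) := by
          calc ‖xs A P f φ' n ξ k + φ' k (xs A P f φ' n ξ k)‖
              ≤ ‖xs A P f φ' n ξ k‖ + ‖φ' k (xs A P f φ' n ξ k)‖ := norm_add_le _ _
          _ ≤ 2 * (C * (a k n * ‖ξ‖)) := by linarith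
        calc ‖calA A m (k+1) (P (k+1) (f k (xs A P f φ' n ξ k + φ' k (xs A P f φ' n ξ k))))‖
            ≤ a m (k+1) * ‖f k (xs A P f φ' n ξ k + φ' k (xs A P f φ' n ξ k))‖ :=
              hD1' m (k+1) (by omega) _
        _ ≤ a m (k+1) * (L k * ‖xs A P f φ' n ξ k + φ' k (xs A P f φ' n ξ k)‖) :=
              mul_le_mul_of_nonneg_left (hf1 k _) (ha m (k+1) (by omega)).le
        _ ≤ a m (k+1) * (L k * (2 * (C * (a k n * ‖ξ‖)))) :=
              mul_le_mul_of_nonneg_left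
                (mul_le_mul_of_nonneg_left h2 (hL0 k)) (ha m (k+1) (by omega)).le
        _ = (2 * C * ‖ξ‖) * (a m (k+1) * (a k n * L k)) := by ring
      have hfirst : ‖calA A m n ξ‖ ≤ a m n * ‖ξ‖ := by
        conv_lhs => rw [← hξ]
        exact hD1' m n hm ξ
      have hsum1 : ‖∑ k ∈ Finset.Ico n m,
          calA A m (k+1) (P (k+1) (f k (xs A P f φ' n ξ k + φ' k (xs A P f φ' n ξ k))))‖
            ≤ (2 * C * ‖ξ‖) * (α * a m n) := by
        calc ‖∑ k ∈ Finset.Ico n m,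
            calA A m (k+1) (P (k+1) (f k (xs A P f φ' n ξ k + φ' k (xs A P f φ' n ξ k))))‖
            ≤ ∑ k ∈ Finset.Ico n m,
              ‖calA A m (k+1) (P (k+1) (f k (xs A P f φ' n ξ k + φ' k (xs A P f φ' n ξ k))))‖ :=
              norm_sum_le _ _
        _ ≤ ∑ k ∈ Finset.Ico n m, (2 * C * ‖ξ‖) * (a m (k+1) * (a k n * L k)) :=
              Finset.sum_le_sum hbound
        _ = (2 * C * ‖ξ‖) * ∑ k ∈ Finset.Ico n m, (a m (k+1) * (a k n * L k)) := by
              rw [Finset.mul_sum]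
        _ ≤ (2 * C * ‖ξ‖) * (α * a m n) := by
              refine mul_le_mul_of_nonneg_left (hαle m n hm) ?_
              have := norm_nonneg ξ
              nlinarith
      calc ‖calA A m n ξ + ∑ k ∈ Finset.Ico n m,
          calA A m (k+1) (P (k+1) (f k (xs A P f φ' n ξ k + φ' k (xs A P f φ' n ξ k))))‖
          ≤ ‖calA A m n ξ‖ + ‖∑ k ∈ Finset.Ico n m,
            calA A m (k+1) (P (k+1) (f k (xs A P f φ' n ξ k + φ' k (xs A P f φ' n ξ k))))‖ :=
            norm_add_le _ _
      _ ≤ a m n * ‖ξ‖ + (2 * C * ‖ξ‖) * (α * a m n) := add_le_add hfirst hsum1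
      _ = C * (a m n * ‖ξ‖) := by linear_combination (a m n * ‖ξ‖) * hC2
  -- comparison estimate for xs
  have hxs_comp : ∀ (φ' ψ' : ℕ → X → X),
      (∀ k, φ' k 0 = 0) → (∀ k (x y : X), ‖φ' k x - φ' k y‖ ≤ ‖P k x - P k y‖) →
      (∀ k, ψ' k 0 = 0) → (∀ k (x y : X), ‖ψ' k x - ψ' k y‖ ≤ ‖P k x - P k y‖) →
      ∀ (δ : ℝ), 0 ≤ δ → (∀ (k : ℕ) (x : X), ‖φ' k x - ψ' k x‖ ≤ δ * ‖P k x‖) →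
      ∀ (n : ℕ) (ξ ξ' : X), P n ξ = ξ → P n ξ' = ξ' → ∀ m, n ≤ m →
      ‖xs A P f φ' n ξ m - xs A P f ψ' n ξ' m‖
        ≤ (C * ‖ξ - ξ'‖ + C * C * α * δ * ‖ξ'‖) * a m n := by
    intro φ' ψ' hz1 hl1 hz2 hl2 δ hδ0 hδ n ξ ξ' hξ hξ' m
    have hM0 : 0 ≤ C * ‖ξ - ξ'‖ + C * C * α * δ * ‖ξ'‖ :=
      add_nonneg (mul_nonneg hC0.le (norm_nonneg _))
        (mul_nonneg (mul_nonneg (mul_nonneg (mul_nonneg hC0.le hC0.le) hα0) hδ0)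
          (norm_nonneg _))
    induction m using Nat.strong_induction_on with
    | _ m IH =>
      intro hm
      rw [xs_eq A P f φ' n ξ m, xs_eq A P f ψ' n ξ' m]
      have hre : (calA A m n ξ + ∑ k ∈ Finset.Ico n m,
            calA A m (k+1) (P (k+1) (f k (xs A P f φ' n ξ k + φ' k (xs A P f φ' n ξ k)))))
          - (calA A m n ξ' + ∑ k ∈ Finset.Ico n m,
            calA A m (k+1) (P (k+1) (f k (xs A P f ψ' n ξ' k + ψ' k (xs A P f ψ' n ξ' k)))))
          = (calA A m n ξ - calA A m n ξ') + ∑ k ∈ Finset.Ico n m,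
            (calA A m (k+1) (P (k+1) (f k (xs A P f φ' n ξ k + φ' k (xs A P f φ' n ξ k))))
             - calA A m (k+1) (P (k+1) (f k (xs A P f ψ' n ξ' k + ψ' k (xs A P f ψ' n ξ' k))))) := by
        rw [Finset.sum_sub_distrib]
        abel
      rw [hre]
      have hfirst : ‖calA A m n ξ - calA A m n ξ'‖ ≤ a m n * ‖ξ - ξ'‖ := by
        rw [← map_sub]
        have h5 : P n (ξ - ξ') = ξ - ξ' := by rw [map_sub, hξ, hξ']
        conv_lhs => rw [← h5]
        exact hD1' m n hm (ξ - ξ')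
      have hterm : ∀ k ∈ Finset.Ico n m,
          ‖calA A m (k+1) (P (k+1) (f k (xs A P f φ' n ξ k + φ' k (xs A P f φ' n ξ k))))
             - calA A m (k+1) (P (k+1) (f k (xs A P f ψ' n ξ' k + ψ' k (xs A P f ψ' n ξ' k))))‖
          ≤ (2 * (C * ‖ξ - ξ'‖ + C * C * α * δ * ‖ξ'‖) + δ * C * ‖ξ'‖)
              * (a m (k+1) * (a k n * L k)) := by
        intro k hk
        have hk' := Finset.mem_Ico.mp hk
        have hyk := IH k hk'.2 hk'.1
        have hygk := hxs_growth ψ' hz2 hl2 n ξ' hξ' k hk'.1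
        have hsplit : (xs A P f φ' n ξ k + φ' k (xs A P f φ' n ξ k))
            - (xs A P f ψ' n ξ' k + ψ' k (xs A P f ψ' n ξ' k))
            = (xs A P f φ' n ξ k - xs A P f ψ' n ξ' k)
              + ((φ' k (xs A P f φ' n ξ k) - φ' k (xs A P f ψ' n ξ' k))
                + (φ' k (xs A P f ψ' n ξ' k) - ψ' k (xs A P f ψ' n ξ' k))) := by abel
        have hu : ‖(xs A P f φ' n ξ k + φ' k (xs A P f φ' n ξ k))
            - (xs A P f ψ' n ξ' k + ψ' k (xs A P f ψ' n ξ' k))‖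
            ≤ (2 * (C * ‖ξ - ξ'‖ + C * C * α * δ * ‖ξ'‖)) * a k n
              + δ * (C * (a k n * ‖ξ'‖)) := by
          rw [hsplit]
          have hA : ‖φ' k (xs A P f φ' n ξ k) - φ' k (xs A P f ψ' n ξ' k)‖
              ≤ (C * ‖ξ - ξ'‖ + C * C * α * δ * ‖ξ'‖) * a k n := by
            have h6 := hl1 k (xs A P f φ' n ξ k) (xs A P f ψ' n ξ' k)
            rw [hxs_mem φ' n ξ hξ k hk'.1, hxs_mem ψ' n ξ' hξ' k hk'.1] at h6
            exact le_trans h6 hyk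
          have hB : ‖φ' k (xs A P f ψ' n ξ' k) - ψ' k (xs A P f ψ' n ξ' k)‖
              ≤ δ * (C * (a k n * ‖ξ'‖)) := by
            have h7 := hδ k (xs A P f ψ' n ξ' k)
            rw [hxs_mem ψ' n ξ' hξ' k hk'.1] at h7
            exact le_trans h7 (mul_le_mul_of_nonneg_left hygk hδ0)
          calc ‖(xs A P f φ' n ξ k - xs A P f ψ' n ξ' k)
              + ((φ' k (xs A P f φ' n ξ k) - φ' k (xs A P f ψ' n ξ' k))
                + (φ' k (xs A P f ψ' n ξ' k) - ψ' k (xs A P f ψ' n ξ' k)))‖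
              ≤ ‖xs A P f φ' n ξ k - xs A P f ψ' n ξ' k‖
                + (‖φ' k (xs A P f φ' n ξ k) - φ' k (xs A P f ψ' n ξ' k)‖
                  + ‖φ' k (xs A P f ψ' n ξ' k) - ψ' k (xs A P f ψ' n ξ' k)‖) :=
              le_trans (norm_add_le _ _) (by gcongr; exact norm_add_le _ _)
          _ ≤ (C * ‖ξ - ξ'‖ + C * C * α * δ * ‖ξ'‖) * a k n
                + ((C * ‖ξ - ξ'‖ + C * C * α * δ * ‖ξ'‖) * a k n + δ * (C * (a k n * ‖ξ'‖))) := by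
              exact add_le_add hyk (add_le_add hA hB)
          _ = (2 * (C * ‖ξ - ξ'‖ + C * C * α * δ * ‖ξ'‖)) * a k n
              + δ * (C * (a k n * ‖ξ'‖)) := by ring
        calc ‖calA A m (k+1) (P (k+1) (f k (xs A P f φ' n ξ k + φ' k (xs A P f φ' n ξ k))))
             - calA A m (k+1) (P (k+1) (f k (xs A P f ψ' n ξ' k + ψ' k (xs A P f ψ' n ξ' k))))‖
            = ‖calA A m (k+1) (P (k+1) ((f k (xs A P f φ' n ξ k + φ' k (xs A P f φ' n ξ k)))
              - (f k (xs A P f ψ' n ξ' k + ψ' k (xs A P f ψ' n ξ' k)))))‖ := by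
              rw [map_sub, map_sub]
        _ ≤ a m (k+1) * ‖(f k (xs A P f φ' n ξ k + φ' k (xs A P f φ' n ξ k)))
              - (f k (xs A P f ψ' n ξ' k + ψ' k (xs A P f ψ' n ξ' k)))‖ :=
              hD1' m (k+1) (by omega) _
        _ ≤ a m (k+1) * (L k * ‖(xs A P f φ' n ξ k + φ' k (xs A P f φ' n ξ k))
              - (xs A P f ψ' n ξ' k + ψ' k (xs A P f ψ' n ξ' k))‖) :=
              mul_le_mul_of_nonneg_left (hLip k _ _) (ha m (k+1) (by omega)).le
        _ ≤ a m (k+1) * (L k * ((2 * (C * ‖ξ - ξ'‖ + C * C * α * δ * ‖ξ'‖)) * a k n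
              + δ * (C * (a k n * ‖ξ'‖)))) :=
              mul_le_mul_of_nonneg_left
                (mul_le_mul_of_nonneg_left hu (hL0 k)) (ha m (k+1) (by omega)).le
        _ = (2 * (C * ‖ξ - ξ'‖ + C * C * α * δ * ‖ξ'‖) + δ * C * ‖ξ'‖)
              * (a m (k+1) * (a k n * L k)) := by ring
      have hc0 : 0 ≤ 2 * (C * ‖ξ - ξ'‖ + C * C * α * δ * ‖ξ'‖) + δ * C * ‖ξ'‖ := by
        have h8 : 0 ≤ δ * C * ‖ξ'‖ := mul_nonneg (mul_nonneg hδ0 hC0.le) (norm_nonneg _)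
        linarith
      calc ‖(calA A m n ξ - calA A m n ξ') + ∑ k ∈ Finset.Ico n m,
            (calA A m (k+1) (P (k+1) (f k (xs A P f φ' n ξ k + φ' k (xs A P f φ' n ξ k))))
             - calA A m (k+1) (P (k+1) (f k (xs A P f ψ' n ξ' k + ψ' k (xs A P f ψ' n ξ' k)))))‖
          ≤ ‖calA A m n ξ - calA A m n ξ'‖ + ∑ k ∈ Finset.Ico n m,
            ‖calA A m (k+1) (P (k+1) (f k (xs A P f φ' n ξ k + φ' k (xs A P f φ' n ξ k))))
             - calA A m (k+1) (P (k+1) (f k (xs A P f ψ' n ξ' k + ψ' k (xs A P f ψ' n ξ' k))))‖ :=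
            le_trans (norm_add_le _ _) (by gcongr; exact norm_sum_le _ _)
      _ ≤ a m n * ‖ξ - ξ'‖ + ∑ k ∈ Finset.Ico n m,
            (2 * (C * ‖ξ - ξ'‖ + C * C * α * δ * ‖ξ'‖) + δ * C * ‖ξ'‖)
              * (a m (k+1) * (a k n * L k)) :=
            add_le_add hfirst (Finset.sum_le_sum hterm)
      _ = a m n * ‖ξ - ξ'‖ + (2 * (C * ‖ξ - ξ'‖ + C * C * α * δ * ‖ξ'‖) + δ * C * ‖ξ'‖)
            * ∑ k ∈ Finset.Ico n m, (a m (k+1) * (a k n * L k)) := by rw [Finset.mul_sum]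
      _ ≤ a m n * ‖ξ - ξ'‖ + (2 * (C * ‖ξ - ξ'‖ + C * C * α * δ * ‖ξ'‖) + δ * C * ‖ξ'‖)
            * (α * a m n) := by
            exact add_le_add_right (mul_le_mul_of_nonneg_left (hαle m n hm) hc0) _
      _ = (C * ‖ξ - ξ'‖ + C * C * α * δ * ‖ξ'‖) * a m n := by
            linear_combination (a m n * (‖ξ - ξ'‖ + α * C * δ * ‖ξ'‖)) * hC2
  -- bound on the summands of the series
  have hFbound : ∀ (φ' : ℕ → X → X), (∀ k, φ' k 0 = 0) →
      (∀ k (x y : X), ‖φ' k x - φ' k y‖ ≤ ‖P k x - P k y‖) →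
      ∀ (n : ℕ) (ξ : X), P n ξ = ξ → ∀ j : ℕ,
      ‖B (n+j+1) n (f (n+j) (xs A P f φ' n ξ (n+j) + φ' (n+j) (xs A P f φ' n ξ (n+j))))‖
        ≤ (b (n+j+1) n * (a (n+j) n * L (n+j))) * (2 * C * ‖ξ‖) := by
    intro φ' hz hl n ξ hξ j
    have h1 : ‖φ' (n+j) (xs A P f φ' n ξ (n+j))‖ ≤ ‖xs A P f φ' n ξ (n+j)‖ := by
      have h2 := hl (n+j) (xs A P f φ' n ξ (n+j)) 0
      rw [hz (n+j), sub_zero, map_zero, sub_zero,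
        hxs_mem φ' n ξ hξ (n+j) (Nat.le_add_right n j)] at h2
      exact h2
    have h3 := hxs_growth φ' hz hl n ξ hξ (n+j) (Nat.le_add_right n j)
    have h2 : ‖xs A P f φ' n ξ (n+j) + φ' (n+j) (xs A P f φ' n ξ (n+j))‖
        ≤ 2 * (C * (a (n+j) n * ‖ξ‖)) := by
      calc ‖xs A P f φ' n ξ (n+j) + φ' (n+j) (xs A P f φ' n ξ (n+j))‖
          ≤ ‖xs A P f φ' n ξ (n+j)‖ + ‖φ' (n+j) (xs A P f φ' n ξ (n+j))‖ := norm_add_le _ _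
      _ ≤ 2 * (C * (a (n+j) n * ‖ξ‖)) := by linarith
    calc ‖B (n+j+1) n (f (n+j) (xs A P f φ' n ξ (n+j) + φ' (n+j) (xs A P f φ' n ξ (n+j))))‖
        ≤ b (n+j+1) n * ‖f (n+j) (xs A P f φ' n ξ (n+j) + φ' (n+j) (xs A P f φ' n ξ (n+j)))‖ :=
          hD2' (n+j+1) n (by omega) _
    _ ≤ b (n+j+1) n * (L (n+j) * ‖xs A P f φ' n ξ (n+j) + φ' (n+j) (xs A P f φ' n ξ (n+j))‖) :=
          mul_le_mul_of_nonneg_left (hf1 (n+j) _) (hb (n+j+1) n (by omega)).le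
    _ ≤ b (n+j+1) n * (L (n+j) * (2 * (C * (a (n+j) n * ‖ξ‖)))) :=
          mul_le_mul_of_nonneg_left
            (mul_le_mul_of_nonneg_left h2 (hL0 (n+j))) (hb (n+j+1) n (by omega)).le
    _ = (b (n+j+1) n * (a (n+j) n * L (n+j))) * (2 * C * ‖ξ‖) := by ring
  -- summability of the series
  have hFsummable : ∀ (φ' : ℕ → X → X), (∀ k, φ' k 0 = 0) →
      (∀ k (x y : X), ‖φ' k x - φ' k y‖ ≤ ‖P k x - P k y‖) →
      ∀ (n : ℕ) (ξ : X), P n ξ = ξ →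
      Summable (fun j : ℕ => B (n+j+1) n (f (n+j)
        (xs A P f φ' n ξ (n+j) + φ' (n+j) (xs A P f φ' n ξ (n+j))))) := by
    intro φ' hz hl n ξ hξ
    exact Summable.of_norm_bounded ((hsum n).mul_right (2 * C * ‖ξ‖)) (hFbound φ' hz hl n ξ hξ)
  -- unified comparison estimate for the map T
  have hTcomp : ∀ (φ' ψ' : ℕ → X → X),
      (∀ k, φ' k 0 = 0) → (∀ k (x y : X), ‖φ' k x - φ' k y‖ ≤ ‖P k x - P k y‖) →
      (∀ k, ψ' k 0 = 0) → (∀ k (x y : X), ‖ψ' k x - ψ' k y‖ ≤ ‖P k x - P k y‖) →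
      ∀ (δ : ℝ), 0 ≤ δ → (∀ (k : ℕ) (x : X), ‖φ' k x - ψ' k x‖ ≤ δ * ‖P k x‖) →
      ∀ (n : ℕ) (x x' : X),
      ‖Tmap A P B f φ' n x - Tmap A P B f ψ' n x'‖
        ≤ 2 * β * C * ‖P n x - P n x'‖ + θ * δ * ‖P n x'‖ := by
    intro φ' ψ' hz1 hl1 hz2 hl2 δ hδ0 hδ n x x'
    have hξ : P n (P n x) = P n x := hP n x
    have hξ' : P n (P n x') = P n x' := hP n x'
    set F : ℕ → X := fun j : ℕ => B (n+j+1) n (f (n+j)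
      (xs A P f φ' n (P n x) (n+j) + φ' (n+j) (xs A P f φ' n (P n x) (n+j)))) with hFdef
    set G : ℕ → X := fun j : ℕ => B (n+j+1) n (f (n+j)
      (xs A P f ψ' n (P n x') (n+j) + ψ' (n+j) (xs A P f ψ' n (P n x') (n+j)))) with hGdef
    have hFs : Summable F := hFsummable φ' hz1 hl1 n (P n x) hξ
    have hGs : Summable G := hFsummable ψ' hz2 hl2 n (P n x') hξ'
    have hdiff : ∀ j : ℕ, ‖F j - G j‖ ≤ (b (n+j+1) n * (a (n+j) n * L (n+j)))
        * (2 * (C * ‖P n x - P n x'‖ + C * C * α * δ * ‖P n x'‖) + δ * C * ‖P n x'‖) := by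
      intro j
      have hy := hxs_comp φ' ψ' hz1 hl1 hz2 hl2 δ hδ0 hδ n (P n x) (P n x') hξ hξ'
        (n+j) (Nat.le_add_right n j)
      have hyg := hxs_growth ψ' hz2 hl2 n (P n x') hξ' (n+j) (Nat.le_add_right n j)
      have hsplit : (xs A P f φ' n (P n x) (n+j) + φ' (n+j) (xs A P f φ' n (P n x) (n+j)))
          - (xs A P f ψ' n (P n x') (n+j) + ψ' (n+j) (xs A P f ψ' n (P n x') (n+j)))
          = (xs A P f φ' n (P n x) (n+j) - xs A P f ψ' n (P n x') (n+j))
            + ((φ' (n+j) (xs A P f φ' n (P n x) (n+j)) - φ' (n+j) (xs A P f ψ' n (P n x') (n+j)))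
              + (φ' (n+j) (xs A P f ψ' n (P n x') (n+j))
                - ψ' (n+j) (xs A P f ψ' n (P n x') (n+j)))) := by abel
      have hA : ‖φ' (n+j) (xs A P f φ' n (P n x) (n+j)) - φ' (n+j) (xs A P f ψ' n (P n x') (n+j))‖
          ≤ (C * ‖P n x - P n x'‖ + C * C * α * δ * ‖P n x'‖) * a (n+j) n := by
        have h6 := hl1 (n+j) (xs A P f φ' n (P n x) (n+j)) (xs A P f ψ' n (P n x') (n+j))
        rw [hxs_mem φ' n (P n x) hξ (n+j) (Nat.le_add_right n j),
          hxs_mem ψ' n (P n x') hξ' (n+j) (Nat.le_add_right n j)] at h6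
        exact le_trans h6 hy
      have hB : ‖φ' (n+j) (xs A P f ψ' n (P n x') (n+j))
          - ψ' (n+j) (xs A P f ψ' n (P n x') (n+j))‖ ≤ δ * (C * (a (n+j) n * ‖P n x'‖)) := by
        have h7 := hδ (n+j) (xs A P f ψ' n (P n x') (n+j))
        rw [hxs_mem ψ' n (P n x') hξ' (n+j) (Nat.le_add_right n j)] at h7
        exact le_trans h7 (mul_le_mul_of_nonneg_left hyg hδ0)
      have hu : ‖(xs A P f φ' n (P n x) (n+j) + φ' (n+j) (xs A P f φ' n (P n x) (n+j)))
          - (xs A P f ψ' n (P n x') (n+j) + ψ' (n+j) (xs A P f ψ' n (P n x') (n+j)))‖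
          ≤ (2 * (C * ‖P n x - P n x'‖ + C * C * α * δ * ‖P n x'‖)) * a (n+j) n
            + δ * (C * (a (n+j) n * ‖P n x'‖)) := by
        rw [hsplit]
        calc ‖(xs A P f φ' n (P n x) (n+j) - xs A P f ψ' n (P n x') (n+j))
            + ((φ' (n+j) (xs A P f φ' n (P n x) (n+j)) - φ' (n+j) (xs A P f ψ' n (P n x') (n+j)))
              + (φ' (n+j) (xs A P f ψ' n (P n x') (n+j))
                - ψ' (n+j) (xs A P f ψ' n (P n x') (n+j))))‖
            ≤ ‖xs A P f φ' n (P n x) (n+j) - xs A P f ψ' n (P n x') (n+j)‖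
              + (‖φ' (n+j) (xs A P f φ' n (P n x) (n+j))
                  - φ' (n+j) (xs A P f ψ' n (P n x') (n+j))‖
                + ‖φ' (n+j) (xs A P f ψ' n (P n x') (n+j))
                  - ψ' (n+j) (xs A P f ψ' n (P n x') (n+j))‖) :=
            le_trans (norm_add_le _ _) (by gcongr; exact norm_add_le _ _)
        _ ≤ (C * ‖P n x - P n x'‖ + C * C * α * δ * ‖P n x'‖) * a (n+j) n
              + ((C * ‖P n x - P n x'‖ + C * C * α * δ * ‖P n x'‖) * a (n+j) n
                + δ * (C * (a (n+j) n * ‖P n x'‖))) := add_le_add hy (add_le_add hA hB)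
        _ = (2 * (C * ‖P n x - P n x'‖ + C * C * α * δ * ‖P n x'‖)) * a (n+j) n
              + δ * (C * (a (n+j) n * ‖P n x'‖)) := by ring
      calc ‖F j - G j‖
          = ‖B (n+j+1) n ((f (n+j) (xs A P f φ' n (P n x) (n+j)
              + φ' (n+j) (xs A P f φ' n (P n x) (n+j))))
            - (f (n+j) (xs A P f ψ' n (P n x') (n+j)
              + ψ' (n+j) (xs A P f ψ' n (P n x') (n+j)))))‖ := by
            rw [hFdef, hGdef]; rw [← map_sub]
      _ ≤ b (n+j+1) n * ‖(f (n+j) (xs A P f φ' n (P n x) (n+j)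
              + φ' (n+j) (xs A P f φ' n (P n x) (n+j))))
            - (f (n+j) (xs A P f ψ' n (P n x') (n+j)
              + ψ' (n+j) (xs A P f ψ' n (P n x') (n+j))))‖ := hD2' (n+j+1) n (by omega) _
      _ ≤ b (n+j+1) n * (L (n+j) * ‖(xs A P f φ' n (P n x) (n+j)
              + φ' (n+j) (xs A P f φ' n (P n x) (n+j)))
            - (xs A P f ψ' n (P n x') (n+j)
              + ψ' (n+j) (xs A P f ψ' n (P n x') (n+j)))‖) :=
            mul_le_mul_of_nonneg_left (hLip (n+j) _ _) (hb (n+j+1) n (by omega)).le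
      _ ≤ b (n+j+1) n * (L (n+j) * ((2 * (C * ‖P n x - P n x'‖ + C * C * α * δ * ‖P n x'‖))
              * a (n+j) n + δ * (C * (a (n+j) n * ‖P n x'‖)))) :=
            mul_le_mul_of_nonneg_left
              (mul_le_mul_of_nonneg_left hu (hL0 (n+j))) (hb (n+j+1) n (by omega)).le
      _ = (b (n+j+1) n * (a (n+j) n * L (n+j)))
            * (2 * (C * ‖P n x - P n x'‖ + C * C * α * δ * ‖P n x'‖) + δ * C * ‖P n x'‖) := by
            ring
    have hc0 : 0 ≤ 2 * (C * ‖P n x - P n x'‖ + C * C * α * δ * ‖P n x'‖) + δ * C * ‖P n x'‖ := by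
      have h8 : 0 ≤ δ * C * ‖P n x'‖ := mul_nonneg (mul_nonneg hδ0 hC0.le) (norm_nonneg _)
      have h9 : 0 ≤ C * ‖P n x - P n x'‖ + C * C * α * δ * ‖P n x'‖ :=
        add_nonneg (mul_nonneg hC0.le (norm_nonneg _))
          (mul_nonneg (mul_nonneg (mul_nonneg (mul_nonneg hC0.le hC0.le) hα0) hδ0)
            (norm_nonneg _))
      linarith
    have hns : Summable (fun j : ℕ => ‖G j - F j‖) := by
      refine Summable.of_nonneg_of_le (fun j => norm_nonneg _) (fun j => ?_)
        ((hsum n).mul_right (2 * (C * ‖P n x - P n x'‖ + C * C * α * δ * ‖P n x'‖)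
          + δ * C * ‖P n x'‖))
      rw [norm_sub_rev]
      exact hdiff j
    have e1 : Tmap A P B f φ' n x = -∑' j, F j := rfl
    have e2 : Tmap A P B f ψ' n x' = -∑' j, G j := rfl
    calc ‖Tmap A P B f φ' n x - Tmap A P B f ψ' n x'‖
        = ‖∑' j, (G j - F j)‖ := by
          rw [e1, e2, neg_sub_neg, ← (hGs.hasSum.sub hFs.hasSum).tsum_eq]
    _ ≤ ∑' j, ‖G j - F j‖ := norm_tsum_le_tsum_norm hns
    _ ≤ ∑' j : ℕ, (b (n+j+1) n * (a (n+j) n * L (n+j)))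
          * (2 * (C * ‖P n x - P n x'‖ + C * C * α * δ * ‖P n x'‖) + δ * C * ‖P n x'‖) := by
        refine Summable.tsum_le_tsum (fun j => ?_) hns ((hsum n).mul_right _)
        rw [norm_sub_rev]
        exact hdiff j
    _ = (∑' j : ℕ, b (n+j+1) n * (a (n+j) n * L (n+j)))
          * (2 * (C * ‖P n x - P n x'‖ + C * C * α * δ * ‖P n x'‖) + δ * C * ‖P n x'‖) :=
        tsum_mul_right
    _ ≤ β * (2 * (C * ‖P n x - P n x'‖ + C * C * α * δ * ‖P n x'‖) + δ * C * ‖P n x'‖) :=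
        mul_le_mul_of_nonneg_right (hβle n) hc0
    _ = 2 * β * C * ‖P n x - P n x'‖ + θ * δ * ‖P n x'‖ := by
        rw [hθdef]
        linear_combination (β * δ * ‖P n x'‖ * C) * hC2
  -- T is 1-Lipschitz in the appropriate sense
  have hTlip : ∀ (φ' : ℕ → X → X), (∀ k, φ' k 0 = 0) →
      (∀ k (x y : X), ‖φ' k x - φ' k y‖ ≤ ‖P k x - P k y‖) →
      ∀ (n : ℕ) (x y : X),
      ‖Tmap A P B f φ' n x - Tmap A P B f φ' n y‖ ≤ ‖P n x - P n y‖ := by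
    intro φ' hz hl n x y
    have h1 := hTcomp φ' φ' hz hl hz hl 0 le_rfl (fun k z => by simp) n x y
    simp only [mul_zero, zero_mul, add_zero] at h1
    calc ‖Tmap A P B f φ' n x - Tmap A P B f φ' n y‖
        ≤ 2 * β * C * ‖P n x - P n y‖ := h1
    _ ≤ 1 * ‖P n x - P n y‖ := by
        apply mul_le_mul_of_nonneg_right _ (norm_nonneg _)
        linarith
    _ = ‖P n x - P n y‖ := one_mul _
  -- T maps into the kernels
  have hTker : ∀ (φ' : ℕ → X → X), (∀ k, φ' k 0 = 0) →
      (∀ k (x y : X), ‖φ' k x - φ' k y‖ ≤ ‖P k x - P k y‖) →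
      ∀ (n : ℕ) (x : X), P n (Tmap A P B f φ' n x) = 0 := by
    intro φ' hz hl n x
    have hs := hFsummable φ' hz hl n (P n x) (hP n x)
    have h0 : ∀ j : ℕ, P n (B (n+j+1) n (f (n+j)
        (xs A P f φ' n (P n x) (n+j) + φ' (n+j) (xs A P f φ' n (P n x) (n+j))))) = 0 :=
      fun j => hBF (n+j+1) n (by omega) _
    show P n (-∑' j : ℕ, B (n+j+1) n (f (n+j)
        (xs A P f φ' n (P n x) (n+j) + φ' (n+j) (xs A P f φ' n (P n x) (n+j))))) = 0
    rw [map_neg, (P n).map_tsum hs, tsum_congr h0, tsum_zero, neg_zero]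
  -- T vanishes at 0
  have hTzero : ∀ (φ' : ℕ → X → X), (∀ k, φ' k 0 = 0) →
      ∀ n : ℕ, Tmap A P B f φ' n 0 = 0 := by
    intro φ' hz n
    show -∑' j : ℕ, B (n+j+1) n (f (n+j)
        (xs A P f φ' n (P n 0) (n+j) + φ' (n+j) (xs A P f φ' n (P n 0) (n+j)))) = 0
    have h0 : ∀ j : ℕ, B (n+j+1) n (f (n+j)
        (xs A P f φ' n (P n 0) (n+j) + φ' (n+j) (xs A P f φ' n (P n 0) (n+j)))) = 0 := by
      intro j
      rw [map_zero, hxs_zero φ' hz n, hz, add_zero, hf0, map_zero]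
    rw [tsum_congr h0, tsum_zero, neg_zero]
  -- the Picard iteration
  set sq : ℕ → ℕ → X → X := iter (Tmap A P B f) with hsqdef
  have hsqS : ∀ j, sq (j+1) = Tmap A P B f (sq j) := fun j => rfl
  have hGood : ∀ j, (∀ k, sq j k 0 = 0) ∧
      (∀ k (x y : X), ‖sq j k x - sq j k y‖ ≤ ‖P k x - P k y‖) ∧
      (∀ k (x : X), P k (sq j k x) = 0) := by
    intro j
    induction j with
    | zero =>
      refine ⟨fun k => rfl, fun k x y => by
        show ‖(0:X) - (0:X)‖ ≤ ‖P k x - P k y‖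
        simp, fun k x => by
        show P k (0:X) = 0
        simp⟩
    | succ j IH =>
      exact ⟨fun k => hTzero (sq j) IH.1 k, fun k x y => hTlip (sq j) IH.1 IH.2.1 k x y,
        fun k x => hTker (sq j) IH.1 IH.2.1 k x⟩
  have hd : ∀ j : ℕ, ∀ (n : ℕ) (x : X), ‖sq (j+1) n x - sq j n x‖ ≤ θ^j * ‖P n x‖ := by
    intro j
    induction j with
    | zero =>
      intro n x
      have h1 : sq 0 n x = Tmap A P B f (sq 0) n 0 := by
        rw [hTzero (sq 0) (hGood 0).1 n]; rfl
      rw [hsqS 0, h1]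
      have h2 := hTlip (sq 0) (hGood 0).1 (hGood 0).2.1 n x 0
      simpa using h2
    | succ j IH =>
      intro n x
      rw [hsqS (j+1), hsqS j]
      have h1 := hTcomp (sq (j+1)) (sq j) (hGood (j+1)).1 (hGood (j+1)).2.1
        (hGood j).1 (hGood j).2.1 (θ^j) (pow_nonneg hθ0 j) IH n x x
      simp only [sub_self, norm_zero, mul_zero, zero_add] at h1
      calc ‖Tmap A P B f (sq (j+1)) n x - Tmap A P B f (sq j) n x‖
          ≤ θ * θ^j * ‖P n x‖ := h1
      _ = θ^(j+1) * ‖P n x‖ := by rw [pow_succ]; ring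
  -- convergence of the iteration
  have hlim : ∀ (n : ℕ) (x : X), ∃ l : X,
      Filter.Tendsto (fun j => sq j n x) Filter.atTop (nhds l) := by
    intro n x
    apply cauchySeq_tendsto_of_complete
    apply cauchySeq_of_le_geometric θ ‖P n x‖ hθ1
    intro j
    rw [dist_eq_norm, norm_sub_rev]
    calc ‖sq (j+1) n x - sq j n x‖ ≤ θ^j * ‖P n x‖ := hd j n x
    _ = ‖P n x‖ * θ^j := by ring
  choose g hg using hlim
  have h1θ : (0:ℝ) < 1 - θ := by linarith
  have htail : ∀ (j n : ℕ) (x : X), ‖g n x - sq j n x‖ ≤ ((1-θ)⁻¹ * θ^j) * ‖P n x‖ := by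
    intro j n x
    have h1 := dist_le_of_le_geometric_of_tendsto θ ‖P n x‖ hθ1 (fun i => by
      rw [dist_eq_norm, norm_sub_rev]
      calc ‖sq (i+1) n x - sq i n x‖ ≤ θ^i * ‖P n x‖ := hd i n x
      _ = ‖P n x‖ * θ^i := by ring) (hg n x) j
    rw [dist_eq_norm, norm_sub_rev] at h1
    calc ‖g n x - sq j n x‖ ≤ ‖P n x‖ * θ^j / (1-θ) := h1
    _ = ((1-θ)⁻¹ * θ^j) * ‖P n x‖ := by ring
  -- properties of the limit g
  have hgz : ∀ n : ℕ, g n 0 = 0 := by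
    intro n
    have h2 : (fun j => sq j n 0) = fun _ => (0:X) := funext fun j => (hGood j).1 n
    have h1 := hg n 0
    rw [h2] at h1
    exact tendsto_nhds_unique h1 tendsto_const_nhds
  have hgker : ∀ (n : ℕ) (x : X), P n (g n x) = 0 := by
    intro n x
    have h1 : Filter.Tendsto (fun j => P n (sq j n x)) Filter.atTop (nhds (P n (g n x))) :=
      ((P n).continuous.tendsto _).comp (hg n x)
    have h2 : (fun j => P n (sq j n x)) = fun _ => (0:X) :=
      funext fun j => (hGood j).2.2 n x
    rw [h2] at h1
    exact tendsto_nhds_unique h1 tendsto_const_nhds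
  have hglip : ∀ (n : ℕ) (x y : X), ‖g n x - g n y‖ ≤ ‖P n x - P n y‖ := by
    intro n x y
    have h1 : Filter.Tendsto (fun j => ‖sq j n x - sq j n y‖) Filter.atTop
        (nhds ‖g n x - g n y‖) := ((hg n x).sub (hg n y)).norm
    exact le_of_tendsto h1 (Filter.Eventually.of_forall fun j => (hGood j).2.1 n x y)
  -- g is a fixed point of T
  have hgfix : ∀ (n : ℕ) (x : X), Tmap A P B f g n x = g n x := by
    intro n x
    have hδ0 : ∀ j : ℕ, (0:ℝ) ≤ (1-θ)⁻¹ * θ^j :=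
      fun j => mul_nonneg (inv_nonneg.mpr h1θ.le) (pow_nonneg hθ0 j)
    have key : ∀ j : ℕ, ‖Tmap A P B f g n x - g n x‖
        ≤ (θ * (1-θ)⁻¹ * ‖P n x‖ + (1-θ)⁻¹ * θ * ‖P n x‖) * θ^j := by
      intro j
      have h1 := hTcomp g (sq j) hgz hglip (hGood j).1 (hGood j).2.1
        ((1-θ)⁻¹ * θ^j) (hδ0 j) (fun k y => htail j k y) n x x
      simp only [sub_self, norm_zero, mul_zero, zero_add] at h1
      rw [← hsqS j] at h1
      have h2 := htail (j+1) n x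
      have h3 : Tmap A P B f g n x - g n x
          = (Tmap A P B f g n x - sq (j+1) n x) + (sq (j+1) n x - g n x) := by abel
      calc ‖Tmap A P B f g n x - g n x‖
          ≤ ‖Tmap A P B f g n x - sq (j+1) n x‖ + ‖sq (j+1) n x - g n x‖ := by
            rw [h3]; exact norm_add_le _ _
      _ ≤ θ * ((1-θ)⁻¹ * θ^j) * ‖P n x‖ + ((1-θ)⁻¹ * θ^(j+1)) * ‖P n x‖ := by
            refine add_le_add h1 ?_
            rw [norm_sub_rev]
            exact htail (j+1) n x
      _ = (θ * (1-θ)⁻¹ * ‖P n x‖ + (1-θ)⁻¹ * θ * ‖P n x‖) * θ^j := by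
            rw [pow_succ]; ring
    have hten : Filter.Tendsto
        (fun j : ℕ => (θ * (1-θ)⁻¹ * ‖P n x‖ + (1-θ)⁻¹ * θ * ‖P n x‖) * θ^j)
        Filter.atTop (nhds 0) := by
      have h4 := tendsto_pow_atTop_nhds_zero_of_lt_one hθ0 hθ1
      simpa using h4.const_mul (θ * (1-θ)⁻¹ * ‖P n x‖ + (1-θ)⁻¹ * θ * ‖P n x‖)
    have h0 : ‖Tmap A P B f g n x - g n x‖ ≤ 0 :=
      ge_of_tendsto hten (Filter.Eventually.of_forall key)
    exact sub_eq_zero.mp (norm_le_zero_iff.mp h0)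
  -- uniqueness of the fixed point
  have huniq_fix : ∀ (ψ' : ℕ → X → X), (∀ k, ψ' k 0 = 0) →
      (∀ k (x y : X), ‖ψ' k x - ψ' k y‖ ≤ ‖P k x - P k y‖) →
      (∀ (n : ℕ) (x : X), Tmap A P B f ψ' n x = ψ' n x) →
      ∀ (n : ℕ) (x : X), ψ' n x = g n x := by
    intro ψ' hz hl hfix
    have key : ∀ k : ℕ, ∀ (n : ℕ) (x : X), ‖ψ' n x - g n x‖ ≤ (2 * θ^k) * ‖P n x‖ := by
      intro k
      induction k with
      | zero =>
        intro n x
        have h1 : ‖ψ' n x‖ ≤ ‖P n x‖ := by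
          have h2 := hl n x 0
          rw [hz n, sub_zero, map_zero, sub_zero] at h2
          exact h2
        have h2 : ‖g n x‖ ≤ ‖P n x‖ := by
          have h3 := hglip n x 0
          rw [hgz n, sub_zero, map_zero, sub_zero] at h3
          exact h3
        calc ‖ψ' n x - g n x‖ ≤ ‖ψ' n x‖ + ‖g n x‖ := norm_sub_le _ _
        _ ≤ (2 * θ^0) * ‖P n x‖ := by
            rw [pow_zero]
            linarith
      | succ k IH =>
        intro n x
        have h1 := hTcomp ψ' g hz hl hgz hglip (2 * θ^k)
          (mul_nonneg (by norm_num) (pow_nonneg hθ0 k)) IH n x x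
        rw [hfix n x, hgfix n x] at h1
        simp only [sub_self, norm_zero, mul_zero, zero_add] at h1
        calc ‖ψ' n x - g n x‖ ≤ θ * (2 * θ^k) * ‖P n x‖ := h1
        _ = (2 * θ^(k+1)) * ‖P n x‖ := by rw [pow_succ]; ring
    intro n x
    have hten : Filter.Tendsto (fun k : ℕ => (2 * θ^k) * ‖P n x‖) Filter.atTop (nhds 0) := by
      have h4 := tendsto_pow_atTop_nhds_zero_of_lt_one hθ0 hθ1
      have h5 := (h4.const_mul (2:ℝ)).mul_const ‖P n x‖
      simpa using h5
    have h0 : ‖ψ' n x - g n x‖ ≤ 0 :=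
      ge_of_tendsto hten (Filter.Eventually.of_forall fun k => key k n x)
    exact sub_eq_zero.mp (norm_le_zero_iff.mp h0)
  -- the invariant function φ₀
  obtain ⟨φ₀, hφ₀⟩ : ∃ φ₀ : ∀ n : ℕ, LinearMap.range (P n : X →ₗ[ℝ] X) → LinearMap.ker (P n : X →ₗ[ℝ] X),
      ∀ (n : ℕ) (ξ : LinearMap.range (P n : X →ₗ[ℝ] X)), (φ₀ n ξ : X) = g n (ξ : X) :=
    ⟨fun n ξ => ⟨g n (ξ : X), LinearMap.mem_ker.mpr (hgker n (ξ : X))⟩, fun n ξ => rfl⟩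
  refine ⟨φ₀, ⟨⟨?_, ?_⟩, ?_⟩, ?_⟩
  · -- vanishing at zero
    intro n
    apply Subtype.ext
    rw [hφ₀ n 0]
    show g n ((0 : LinearMap.range (P n : X →ₗ[ℝ] X)) : X) = ((0 : LinearMap.ker (P n : X →ₗ[ℝ] X)) : X)
    rw [ZeroMemClass.coe_zero, ZeroMemClass.coe_zero, hgz n]
  · -- Lipschitz property
    intro n ξ ξ'
    rw [hφ₀ n ξ, hφ₀ n ξ']
    have h1 := hglip n (ξ : X) (ξ' : X)
    rwa [hrange n ξ, hrange n ξ'] at h1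
  · -- the HasSum property
    rintro n x ⟨hx0, hxC, hxrec⟩ ξ
    have hxeq : ∀ m, n ≤ m → (x m ξ : X) = xs A P f g n (ξ : X) m := by
      intro m
      induction m using Nat.strong_induction_on with
      | _ m IH =>
        intro hm
        rw [hxrec m hm ξ, xs_eq]
        congr 1
        refine Finset.sum_congr rfl fun k hk => ?_
        have hk' := Finset.mem_Ico.mp hk
        have h1 := IH k hk'.2 hk'.1
        rw [hφ₀ k (x k ξ), h1]
    have hFs := hFsummable g hgz hglip n (ξ : X) (hrange n ξ)
    have hfun : (fun j : ℕ => B (n+j+1) n (f (n+j)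
          ((x (n+j) ξ : X) + (φ₀ (n+j) (x (n+j) ξ) : X))))
        = fun j : ℕ => B (n+j+1) n (f (n+j)
          (xs A P f g n (ξ : X) (n+j) + g (n+j) (xs A P f g n (ξ : X) (n+j)))) := by
      funext j
      rw [hφ₀ (n+j) (x (n+j) ξ), hxeq (n+j) (Nat.le_add_right n j)]
    rw [hfun, hφ₀ n ξ]
    have hTval : Tmap A P B f g n (ξ : X) = -∑' j : ℕ, B (n+j+1) n (f (n+j)
        (xs A P f g n (ξ : X) (n+j) + g (n+j) (xs A P f g n (ξ : X) (n+j)))) := by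
      show -∑' j : ℕ, B (n+j+1) n (f (n+j)
        (xs A P f g n (P n (ξ:X)) (n+j) + g (n+j) (xs A P f g n (P n (ξ:X)) (n+j)))) = _
      rw [hrange n ξ]
    have h2 : (∑' j : ℕ, B (n+j+1) n (f (n+j)
        (xs A P f g n (ξ : X) (n+j) + g (n+j) (xs A P f g n (ξ : X) (n+j)))))
        = -(g n (ξ : X)) := by
      have h3 := hgfix n (ξ : X)
      rw [hTval] at h3
      exact neg_eq_iff_eq_neg.mp h3
    have h4 := hFs.hasSum
    rw [h2] at h4
    exact h4
  · -- uniqueness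
    rintro ψ ⟨⟨hψ0, hψlip⟩, hψsum⟩
    set ψ' : ℕ → X → X := fun k y =>
      (ψ k ⟨P k y, LinearMap.mem_range.mpr ⟨y, rfl⟩⟩ : X) with hψ'def
    have hψ'coe : ∀ (k : ℕ) (η : LinearMap.range (P k : X →ₗ[ℝ] X)), ψ' k (η : X) = (ψ k η : X) := by
      intro k η
      have h1 : (⟨P k (η : X), LinearMap.mem_range.mpr ⟨(η : X), rfl⟩⟩ :
          LinearMap.range (P k : X →ₗ[ℝ] X)) = η := Subtype.ext (hrange k η)
      show (ψ k ⟨P k (η : X), LinearMap.mem_range.mpr ⟨(η : X), rfl⟩⟩ : X) = (ψ k η : X)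
      rw [h1]
    have hψ'z : ∀ k, ψ' k 0 = 0 := by
      intro k
      have h1 := hψ'coe k 0
      rw [ZeroMemClass.coe_zero] at h1
      rw [h1, hψ0 k, ZeroMemClass.coe_zero]
    have hψ'lip : ∀ (k : ℕ) (y z : X), ‖ψ' k y - ψ' k z‖ ≤ ‖P k y - P k z‖ := by
      intro k y z
      exact hψlip k ⟨P k y, LinearMap.mem_range.mpr ⟨y, rfl⟩⟩
        ⟨P k z, LinearMap.mem_range.mpr ⟨z, rfl⟩⟩
    have hψ'fix : ∀ (n : ℕ) (y : X), Tmap A P B f ψ' n y = ψ' n y := by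
      have hsub : ∀ (n : ℕ) (ξ : LinearMap.range (P n : X →ₗ[ℝ] X)),
          Tmap A P B f ψ' n (ξ : X) = (ψ n ξ : X) := by
        intro n ξ
        obtain ⟨xd, hxdco⟩ : ∃ xd : ∀ m : ℕ, LinearMap.range (P n : X →ₗ[ℝ] X) → LinearMap.range (P m : X →ₗ[ℝ] X),
            ∀ (m : ℕ), n ≤ m → ∀ ζ : LinearMap.range (P n : X →ₗ[ℝ] X),
              (xd m ζ : X) = xs A P f ψ' n (ζ : X) m := by
          refine ⟨fun m ζ => if h : n ≤ m then
            ⟨xs A P f ψ' n (ζ : X) m, LinearMap.mem_range.mpr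
              ⟨xs A P f ψ' n (ζ : X) m, hxs_mem ψ' n (ζ : X) (hrange n ζ) m h⟩⟩ else 0,
            fun m h ζ => ?_⟩
          simp only [dif_pos h]
        have hc1 : ∀ m : ℕ, n ≤ m → xd m 0 = 0 := by
          intro m hm
          apply Subtype.ext
          rw [hxdco m hm 0, ZeroMemClass.coe_zero, hxs_zero ψ' hψ'z n m, ZeroMemClass.coe_zero]
        have hc2 : ∃ C' : ℝ, ∀ m : ℕ, n ≤ m → ∀ ζ : LinearMap.range (P n : X →ₗ[ℝ] X),
            ‖(xd m ζ : X)‖ ≤ C' * (a m n * ‖(ζ : X)‖) := by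
          refine ⟨C, fun m hm ζ => ?_⟩
          rw [hxdco m hm ζ]
          exact hxs_growth ψ' hψ'z hψ'lip n (ζ : X) (hrange n ζ) m hm
        have hc3 : ∀ m : ℕ, n ≤ m → ∀ ζ : LinearMap.range (P n : X →ₗ[ℝ] X),
            (xd m ζ : X) = calA A m n (ζ : X) + ∑ k ∈ Finset.Ico n m,
              calA A m (k+1) (P (k+1) (f k ((xd k ζ : X) + (ψ k (xd k ζ) : X)))) := by
          intro m hm ζ
          rw [hxdco m hm ζ, xs_eq]
          congr 1
          refine Finset.sum_congr rfl fun k hk => ?_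
          have hk' := Finset.mem_Ico.mp hk
          have h5 : (ψ k (xd k ζ) : X) = ψ' k (xs A P f ψ' n (ζ : X) k) := by
            rw [← hψ'coe k (xd k ζ), hxdco k hk'.1 ζ]
          rw [h5, hxdco k hk'.1 ζ]
        have hhs := hψsum n xd ⟨hc1, hc2, hc3⟩ ξ
        have hfun2 : (fun j : ℕ => B (n+j+1) n (f (n+j)
              ((xd (n+j) ξ : X) + (ψ (n+j) (xd (n+j) ξ) : X))))
            = fun j : ℕ => B (n+j+1) n (f (n+j)
              (xs A P f ψ' n (ξ : X) (n+j) + ψ' (n+j) (xs A P f ψ' n (ξ : X) (n+j)))) := by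
          funext j
          have h5 : (ψ (n+j) (xd (n+j) ξ) : X)
              = ψ' (n+j) (xs A P f ψ' n (ξ : X) (n+j)) := by
            rw [← hψ'coe (n+j) (xd (n+j) ξ), hxdco (n+j) (Nat.le_add_right n j) ξ]
          rw [h5, hxdco (n+j) (Nat.le_add_right n j) ξ]
        rw [hfun2] at hhs
        have h6 := hhs.tsum_eq
        show -∑' j : ℕ, B (n+j+1) n (f (n+j) (xs A P f ψ' n (P n (ξ:X)) (n+j)
            + ψ' (n+j) (xs A P f ψ' n (P n (ξ:X)) (n+j)))) = (ψ n ξ : X)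
        rw [hrange n ξ, h6, neg_neg]
      intro n y
      have h8 : Tmap A P B f ψ' n y = Tmap A P B f ψ' n (P n y) := by
        simp only [Tmap, hP n y]
      rw [h8]
      exact hsub n ⟨P n y, LinearMap.mem_range.mpr ⟨y, rfl⟩⟩
    have hψg := huniq_fix ψ' hψ'z hψ'lip hψ'fix
    funext n ξ
    apply Subtype.ext
    rw [hφ₀ n ξ, ← hψ'coe n ξ]
    exact hψg n (ξ : X)
end
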